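/- arXiv:1111.4604 — 8 statements merged into one kernel-verified Lean document; each statement's English description precedes it below -/
import Mathlib

section
/- Let g be an orientation-preserving homeomorphism of the interval [0,π] (a continuous strictly increasing bijection of [0,π] onto itself) whose set of fixed points is finite, consisting of 0 = φ_{-k} < φ_{-k+1} < … < φ_0 < … < φ_{k-1} < φ_k = π (an odd number 2k+1 of fixed points). Suppose that for each 0 ≤ i < k one of the two following alternatives holds: either (g(φ) > φ for all φ ∈ (φ_{-i-1}, φ_{-i}) and g(φ) < φ for all φ ∈ (φ_i, φ_{i+1})), i.e. all points of both intervals move under g toward φ_0; or (g(φ) < φ for all φ ∈ (φ_{-i-1}, φ_{-i}) and g(φ) > φ for all φ ∈ (φ_i, φ_{i+1})), i.e. all points of both intervals move away from φ_0. Then there exists an orientation-reversing homeomorphism h of [0,π] (a continuous strictly decreasing bijection of [0,π] onto itself) such that g = h ∘ h, and φ_0 is the unique fixed point of h. -/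
open Real
open Set

theorem Equiv.Perm.inv_apply_self {α : Type*} (f : Equiv.Perm α) (x : α) : f⁻¹ (f x) = x :=
  f.symm_apply_apply x

theorem Equiv.Perm.apply_inv_self {α : Type*} (f : Equiv.Perm α) (x : α) : f (f⁻¹ x) = x :=
  f.apply_symm_apply x


/-- Extend a strict-mono self-map of `Icc a b` (fixing endpoints) to a strict mono surjection of ℝ. -/
noncomputable def mextend (a b : ℝ) (f : ℝ → ℝ) : ℝ → ℝ :=
  fun x => if a ≤ x ∧ x ≤ b then f x else x

lemma mextend_eq {a b : ℝ} {f : ℝ → ℝ} {x : ℝ} (hx : x ∈ Icc a b) : mextend a b f x = f x := by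
  simp [mextend, hx.1, hx.2]

lemma mextend_strictMono {a b : ℝ} {f : ℝ → ℝ} (hab : a < b)
    (hmono : StrictMonoOn f (Icc a b)) (hfa : f a = a) (hfb : f b = b) :
    StrictMono (mextend a b f) := by
  have hmem : ∀ x ∈ Icc a b, f x ∈ Icc a b := by
    intro x hx
    constructor
    · rw [← hfa]; rcases eq_or_lt_of_le hx.1 with h | h
      · rw [← h]
      · exact (hmono (left_mem_Icc.2 hab.le) hx h).le
    · rw [← hfb]; rcases eq_or_lt_of_le hx.2 with h | h
      · rw [h]
      · exact (hmono hx (right_mem_Icc.2 hab.le) h).le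
  intro x y hxy
  unfold mextend
  by_cases hx : a ≤ x ∧ x ≤ b <;> by_cases hy : a ≤ y ∧ y ≤ b <;> simp only [hx, hy, if_true, if_false, if_pos, if_neg]
  · exact hmono ⟨hx.1, hx.2⟩ ⟨hy.1, hy.2⟩ hxy
  · -- x in Icc, y not: then y > b
    have hyb : b < y := by
      rcases lt_or_ge b y with h | h
      · exact h
      · exact absurd ⟨(hx.1.trans hxy.le), h⟩ hy
    calc f x ≤ b := (hmem x ⟨hx.1, hx.2⟩).2
    _ < y := hyb
  · -- y in Icc, x not: then x < a
    have hxa : x < a := by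
      rcases lt_or_ge x a with h | h
      · exact h
      · exact absurd ⟨h, hxy.le.trans hy.2⟩ hx
    calc x < a := hxa
    _ ≤ f y := (hmem y ⟨hy.1, hy.2⟩).1
  · exact hxy

lemma mextend_surjective {a b : ℝ} {f : ℝ → ℝ} (hab : a < b)
    (hsurj : SurjOn f (Icc a b) (Icc a b)) : Function.Surjective (mextend a b f) := by
  intro y
  by_cases hy : a ≤ y ∧ y ≤ b
  · obtain ⟨x, hx, hfx⟩ := hsurj (⟨hy.1, hy.2⟩ : y ∈ Icc a b)
    exact ⟨x, by rw [mextend_eq hx]; exact hfx⟩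
  · exact ⟨y, by simp [mextend, hy]⟩

lemma perm_zpow_strictMono (E : Equiv.Perm ℝ) (h1 : StrictMono ⇑E)
    (h2 : StrictMono ⇑E⁻¹) : ∀ n : ℤ, StrictMono ⇑(E ^ n) := by
  intro n
  induction n using Int.induction_on with
  | zero => simpa using strictMono_id
  | succ n ih =>
    rw [zpow_add_one]
    intro x y hxy
    simpa only [Equiv.Perm.mul_apply] using ih (h1 hxy)
  | pred n ih =>
    rw [zpow_sub_one]
    intro x y hxy
    simpa only [Equiv.Perm.mul_apply] using ih (h2 hxy)

lemma perm_zpow_fixed (E : Equiv.Perm ℝ) {a : ℝ} (ha : E a = a) : ∀ n : ℤ, (E ^ n) a = a := by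
  have ha' : E⁻¹ a = a := by
    conv_lhs => rw [← ha]
    exact Equiv.Perm.inv_apply_self E a
  intro n
  induction n using Int.induction_on with
  | zero => simp
  | succ n ih => rw [zpow_add_one, Equiv.Perm.mul_apply, ha, ih]
  | pred n ih => rw [zpow_sub_one, Equiv.Perm.mul_apply, ha', ih]

lemma perm_zpow_add_apply (E : Equiv.Perm ℝ) (m n : ℤ) (x : ℝ) :
    (E ^ (m + n)) x = (E ^ m) ((E ^ n) x) := by
  rw [zpow_add, Equiv.Perm.mul_apply]

lemma orbit_sup_inf {a b : ℝ} {f : ℝ → ℝ}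
    (hmono : StrictMonoOn f (Icc a b)) (hsurj : SurjOn f (Icc a b) (Icc a b))
    (hnofix : ∀ x ∈ Ioo a b, f x ≠ x)
    {p : ℤ → ℝ} (hmem : ∀ n, p n ∈ Ioo a b) (hstep : ∀ n, f (p n) = p (n + 1)) :
    (⨆ n, p n) = b ∧ (⨅ n, p n) = a := by
  have hbdd : BddAbove (Set.range p) := ⟨b, by rintro y ⟨n, rfl⟩; exact (hmem n).2.le⟩
  have hbddb : BddBelow (Set.range p) := ⟨a, by rintro y ⟨n, rfl⟩; exact (hmem n).1.le⟩
  have hicc : ∀ n, p n ∈ Icc a b := fun n => ⟨(hmem n).1.le, (hmem n).2.le⟩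
  constructor
  · set L := ⨆ n, p n with hL
    have hLb : L ≤ b := ciSup_le fun n => (hmem n).2.le
    have hLmem : L ∈ Icc a b := ⟨(hmem 0).1.le.trans (le_ciSup hbdd 0), hLb⟩
    have haL : a < L := lt_of_lt_of_le (hmem 0).1 (le_ciSup hbdd 0)
    have hle : ∀ n, p n ≤ L := fun n => le_ciSup hbdd n
    have h1 : L ≤ f L := by
      apply ciSup_le
      intro n
      have : p n = f (p (n - 1)) := by rw [hstep (n - 1), sub_add_cancel]
      rw [this]
      exact hmono.monotoneOn (hicc _) hLmem (hle _)
    obtain ⟨w, hw, hfw⟩ := hsurj hLmem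
    have hwge : ∀ n, p n ≤ w := by
      intro n
      have h2 : f (p n) ≤ f w := by rw [hfw, hstep n]; exact hle _
      exact (hmono.le_iff_le (hicc n) hw).1 h2
    have hLw : L ≤ w := ciSup_le hwge
    have h2 : f L ≤ L := by
      have := hmono.monotoneOn hLmem hw hLw; rwa [hfw] at this
    have hfix : f L = L := le_antisymm h2 h1
    by_contra hne
    exact hnofix L ⟨haL, lt_of_le_of_ne hLb hne⟩ hfix
  · set M := ⨅ n, p n with hM
    have haM : a ≤ M := le_ciInf fun n => (hmem n).1.le
    have hMmem : M ∈ Icc a b := ⟨haM, (ciInf_le hbddb 0).trans (hmem 0).2.le⟩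
    have hMb : M < b := lt_of_le_of_lt (ciInf_le hbddb 0) (hmem 0).2
    have hle : ∀ n, M ≤ p n := fun n => ciInf_le hbddb n
    have h1 : f M ≤ M := by
      apply le_ciInf
      intro n
      have : p n = f (p (n - 1)) := by rw [hstep (n - 1), sub_add_cancel]
      rw [this]
      exact hmono.monotoneOn hMmem (hicc _) (hle _)
    obtain ⟨w, hw, hfw⟩ := hsurj hMmem
    have hwle : ∀ n, w ≤ p n := by
      intro n
      have h2 : f w ≤ f (p n) := by rw [hfw, hstep n]; exact hle _
      exact (hmono.le_iff_le hw (hicc n)).1 h2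
    have hMw : w ≤ M := le_ciInf hwle
    have h2 : M ≤ f M := by
      have := hmono.monotoneOn hw hMmem hMw; rwa [hfw] at this
    have hfix : f M = M := le_antisymm h1 h2
    by_contra hne
    exact hnofix M ⟨lt_of_le_of_ne haM (Ne.symm hne), hMb⟩ hfix


section scratch
variable {a b c d : ℝ}

set_option maxHeartbeats 1000000 in
lemma conj_up (hab : a < b) (hcd : c < d) {f F : ℝ → ℝ}
    (hf_mono : StrictMonoOn f (Icc a b)) (hf_surj : SurjOn f (Icc a b) (Icc a b))
    (hfa : f a = a) (hfb : f b = b) (hf_push : ∀ x ∈ Ioo a b, x < f x)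
    (hF_mono : StrictMonoOn F (Icc c d)) (hF_surj : SurjOn F (Icc c d) (Icc c d))
    (hFc : F c = c) (hFd : F d = d) (hF_pull : ∀ y ∈ Ioo c d, F y < y) :
    ∃ h : ℝ → ℝ, StrictAntiOn h (Icc a b) ∧ h '' Icc a b = Icc c d ∧
      h a = d ∧ h b = c ∧ ∀ x ∈ Icc a b, h (f x) = F (h x) := by
  classical
  -- extensions and permutations
  have hfe_mono := mextend_strictMono hab hf_mono hfa hfb
  have hfe_surj := mextend_surjective hab hf_surj
  set E : Equiv.Perm ℝ := (StrictMono.orderIsoOfSurjective _ hfe_mono hfe_surj).toEquiv with hEdef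
  have hE : ∀ x, E x = mextend a b f x := fun x => rfl
  have hE1 : StrictMono ⇑E := hfe_mono
  have hEinv : StrictMono ⇑E⁻¹ := by
    intro x y hxy
    have h1 : E (E⁻¹ x) < E (E⁻¹ y) := by
      rw [Equiv.Perm.apply_inv_self, Equiv.Perm.apply_inv_self]; exact hxy
    by_contra hc
    push_neg at hc
    rcases eq_or_lt_of_le hc with h2 | h2
    · rw [h2] at h1; exact lt_irrefl _ h1
    · exact absurd (hE1 h2) (not_lt.2 h1.le)
  have hEIcc : ∀ x ∈ Icc a b, E x = f x := fun x hx => by rw [hE]; exact mextend_eq hx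
  have hEa : E a = a := by rw [hEIcc a (left_mem_Icc.2 hab.le), hfa]
  have hEb : E b = b := by rw [hEIcc b (right_mem_Icc.2 hab.le), hfb]
  have hEinva : E⁻¹ a = a := by conv_lhs => rw [← hEa]; rw [Equiv.Perm.inv_apply_self]
  have hEinvb : E⁻¹ b = b := by conv_lhs => rw [← hEb]; rw [Equiv.Perm.inv_apply_self]
  -- F-side extension
  have hFe_mono := mextend_strictMono hcd hF_mono hFc hFd
  have hFe_surj := mextend_surjective hcd hF_surj
  set G : Equiv.Perm ℝ := (StrictMono.orderIsoOfSurjective _ hFe_mono hFe_surj).toEquiv with hGdef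
  have hG1 : StrictMono ⇑G := hFe_mono
  have hGinv : StrictMono ⇑G⁻¹ := by
    intro x y hxy
    have h1 : G (G⁻¹ x) < G (G⁻¹ y) := by
      rw [Equiv.Perm.apply_inv_self, Equiv.Perm.apply_inv_self]; exact hxy
    by_contra hc
    push_neg at hc
    rcases eq_or_lt_of_le hc with h2 | h2
    · rw [h2] at h1; exact lt_irrefl _ h1
    · exact absurd (hG1 h2) (not_lt.2 h1.le)
  have hGIcc : ∀ x ∈ Icc c d, G x = F x := fun x hx => mextend_eq hx
  have hGc : G c = c := by rw [hGIcc c (left_mem_Icc.2 hcd.le), hFc]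
  have hGd : G d = d := by rw [hGIcc d (right_mem_Icc.2 hcd.le), hFd]
  have hGinvc : G⁻¹ c = c := by conv_lhs => rw [← hGc]; rw [Equiv.Perm.inv_apply_self]
  have hGinvd : G⁻¹ d = d := by conv_lhs => rw [← hGd]; rw [Equiv.Perm.inv_apply_self]
  -- orbits
  set p : ℤ → ℝ := fun n => (E ^ n) ((a + b) / 2) with hpdef
  set q : ℤ → ℝ := fun n => (G ^ n) ((c + d) / 2) with hqdef
  have hp0 : p 0 = (a + b) / 2 := by simp [hpdef]
  have hq0 : q 0 = (c + d) / 2 := by simp [hqdef]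
  have hpstep : ∀ n : ℤ, p (n + 1) = E (p n) := by
    intro n
    show (E ^ (n + 1)) _ = E ((E ^ n) _)
    rw [add_comm, perm_zpow_add_apply, zpow_one]
  have hqstep : ∀ n : ℤ, q (n + 1) = G (q n) := by
    intro n
    show (G ^ (n + 1)) _ = G ((G ^ n) _)
    rw [add_comm, perm_zpow_add_apply, zpow_one]
  have hppred : ∀ n : ℤ, p (n - 1) = E⁻¹ (p n) := by
    intro n
    have h1 : E (p (n - 1)) = p n := by rw [← hpstep (n - 1), sub_add_cancel]
    rw [← h1, Equiv.Perm.inv_apply_self]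
  have hqpred : ∀ n : ℤ, q (n - 1) = G⁻¹ (q n) := by
    intro n
    have h1 : G (q (n - 1)) = q n := by rw [← hqstep (n - 1), sub_add_cancel]
    rw [← h1, Equiv.Perm.inv_apply_self]
  have hpmem : ∀ n : ℤ, p n ∈ Ioo a b := by
    intro n
    induction n using Int.induction_on with
    | zero => rw [hp0]; constructor <;> [linarith; linarith]
    | succ n ih =>
      rw [hpstep]
      exact ⟨by rw [← hEa]; exact hE1 ih.1, by rw [← hEb]; exact hE1 ih.2⟩
    | pred n ih =>
      rw [show -(n : ℤ) - 1 = (-(n:ℤ)) - 1 from rfl, hppred]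
      exact ⟨by rw [← hEinva]; exact hEinv ih.1, by rw [← hEinvb]; exact hEinv ih.2⟩
  have hqmem : ∀ n : ℤ, q n ∈ Ioo c d := by
    intro n
    induction n using Int.induction_on with
    | zero => rw [hq0]; constructor <;> [linarith; linarith]
    | succ n ih =>
      rw [hqstep]
      exact ⟨by rw [← hGc]; exact hG1 ih.1, by rw [← hGd]; exact hG1 ih.2⟩
    | pred n ih =>
      rw [show -(n : ℤ) - 1 = (-(n:ℤ)) - 1 from rfl, hqpred]
      exact ⟨by rw [← hGinvc]; exact hGinv ih.1, by rw [← hGinvd]; exact hGinv ih.2⟩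
  have hpf : ∀ n : ℤ, f (p n) = p (n + 1) := fun n => by
    rw [hpstep n, hEIcc _ (Ioo_subset_Icc_self (hpmem n))]
  have hqF : ∀ n : ℤ, F (q n) = q (n + 1) := fun n => by
    rw [hqstep n, hGIcc _ (Ioo_subset_Icc_self (hqmem n))]
  have hpmono : StrictMono p := strictMono_int_of_lt_succ fun n => by
    rw [← hpf n]; exact hf_push _ (hpmem n)
  have hqanti : StrictAnti q := strictAnti_int_of_succ_lt fun n => by
    rw [← hqF n]; exact hF_pull _ (hqmem n)
  obtain ⟨hpsup, hpinf⟩ := orbit_sup_inf hf_mono hf_surj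
    (fun x hx => (hf_push x hx).ne') hpmem hpf
  obtain ⟨hqsup, hqinf⟩ := orbit_sup_inf hF_mono hF_surj
    (fun x hx => (hF_pull x hx).ne) hqmem hqF
  -- floor function for p-orbit
  have hfloor : ∀ x ∈ Ioo a b, ∃ n : ℤ, p n ≤ x ∧ x < p (n + 1) := by
    intro x hx
    have hex : ∃ n, p n ≤ x := by
      by_contra hc
      push_neg at hc
      have h1 : x ≤ ⨅ n, p n := le_ciInf fun n => (hc n).le
      rw [hpinf] at h1
      exact absurd hx.1 (not_lt.2 h1)
    have hex2 : ∃ m : ℤ, x < p m := by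
      by_contra hc
      push_neg at hc
      have h1 : (⨆ n, p n) ≤ x := ciSup_le hc
      rw [hpsup] at h1
      exact absurd hx.2 (not_lt.2 h1)
    obtain ⟨m, hm⟩ := hex2
    obtain ⟨n, hn, hmax⟩ := Int.exists_greatest_of_bdd
      (⟨m, fun z hz => (hpmono.lt_iff_lt.1 (lt_of_le_of_lt hz hm)).le⟩ :
        ∃ b : ℤ, ∀ z : ℤ, p z ≤ x → z ≤ b) hex
    refine ⟨n, hn, ?_⟩
    by_contra hc
    push_neg at hc
    exact absurd (hmax (n + 1) hc) (by omega)
  choose! N hN1 hN2 using hfloor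
  -- affine base map
  have hp01 : p 0 < p 1 := hpmono (by norm_num)
  have hq01 : q 1 < q 0 := hqanti (by norm_num)
  set s : ℝ := (q 1 - q 0) / (p 1 - p 0) with hsdef
  set l : ℝ → ℝ := fun x => q 0 + (x - p 0) * s with hldef
  have hs_neg : s < 0 := div_neg_of_neg_of_pos (by linarith) (by linarith)
  have hl_p0 : l (p 0) = q 0 := by simp [hldef]
  have hl_p1 : l (p 1) = q 1 := by
    have hne : p 1 - p 0 ≠ 0 := by linarith
    simp only [hldef, hsdef]
    rw [mul_comm, div_mul_cancel₀ _ hne]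
    ring
  have hl_anti : StrictAnti l := by
    intro x y hxy
    simp only [hldef]
    nlinarith [mul_lt_mul_of_neg_right hxy hs_neg]
  have hl_surj : ∀ y ∈ Icc (q 1) (q 0), ∃ x ∈ Icc (p 0) (p 1), l x = y := by
    intro y hy
    refine ⟨p 0 + (y - q 0) / s, ⟨?_, ?_⟩, ?_⟩
    · have h1 : (y - q 0) / s ≥ 0 := div_nonneg_of_nonpos (by linarith [hy.2]) hs_neg.le
      linarith
    · have h1 : (y - q 0) / s ≤ p 1 - p 0 := by
        rw [div_le_iff_of_neg hs_neg]
        have h2 : (p 1 - p 0) * s = q 1 - q 0 := by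
          rw [hsdef, mul_comm, div_mul_cancel₀ _ (by linarith : p 1 - p 0 ≠ 0)]
        rw [h2]; linarith [hy.1]
      linarith
    · simp only [hldef]
      rw [add_sub_cancel_left, div_mul_cancel₀ _ hs_neg.ne]
      ring
  -- definition of h
  set h : ℝ → ℝ := fun x =>
    if x ∈ Ioo a b then (G ^ (N x)) (l ((E ^ (-(N x))) x)) else if x ≤ a then d else c
    with hhdef
  have hha : h a = d := by
    simp only [hhdef, mem_Ioo]
    rw [if_neg (by simp), if_pos le_rfl]
  have hhb : h b = c := by
    simp only [hhdef, mem_Ioo]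
    rw [if_neg (by simp), if_neg (by linarith)]
  -- floor uniqueness
  have huniq : ∀ (n m : ℤ) (x : ℝ), p n ≤ x → x < p (n + 1) → p m ≤ x → x < p (m + 1) → n = m := by
    intro n m x h1 h2 h3 h4
    by_contra hc
    rcases lt_or_gt_of_ne hc with hlt | hlt
    · have : p (n + 1) ≤ p m := hpmono.monotone (by omega)
      linarith
    · have : p (m + 1) ≤ p n := hpmono.monotone (by omega)
      linarith
  -- key evaluation lemma
  have hE_endpoint : ∀ n : ℤ, (E ^ (-n)) (p n) = p 0 ∧ (E ^ (-n)) (p (n + 1)) = p 1 := by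
    intro n
    constructor
    · show (E ^ (-n)) ((E ^ n) _) = (E ^ (0 : ℤ)) _
      rw [← perm_zpow_add_apply, neg_add_cancel, zpow_zero, Equiv.Perm.coe_one, id_eq]
    · show (E ^ (-n)) ((E ^ (n + 1)) _) = (E ^ (1 : ℤ)) _
      rw [← perm_zpow_add_apply, show -n + (n + 1) = 1 by ring]
  have hG_q : ∀ n : ℤ, (G ^ n) (q 0) = q n ∧ (G ^ n) (q 1) = q (n + 1) := by
    intro n
    constructor
    · show (G ^ n) ((G ^ (0 : ℤ)) _) = _
      rw [← perm_zpow_add_apply, add_zero]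
    · show (G ^ n) ((G ^ (1 : ℤ)) _) = (G ^ (n + 1)) _
      rw [← perm_zpow_add_apply]
  have hL1 : ∀ (n : ℤ) (x : ℝ), x ∈ Icc (p n) (p (n + 1)) →
      h x = (G ^ n) (l ((E ^ (-n)) x)) := by
    intro n x hx
    have hxIoo : x ∈ Ioo a b :=
      ⟨lt_of_lt_of_le (hpmem n).1 hx.1, lt_of_le_of_lt hx.2 (hpmem (n + 1)).2⟩
    simp only [hhdef]
    rw [if_pos hxIoo]
    rcases lt_or_eq_of_le hx.2 with hlt | heq
    · rw [huniq (N x) n x (hN1 x hxIoo) (hN2 x hxIoo) hx.1 hlt]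
    · have hm : N x = n + 1 := by
        refine huniq (N x) (n + 1) x (hN1 x hxIoo) (hN2 x hxIoo) (le_of_eq heq.symm) ?_
        rw [heq]
        exact hpmono (by omega)
      rw [hm, heq]
      have e1 : (E ^ (-(n + 1))) (p (n + 1)) = p 0 := (hE_endpoint (n + 1)).1
      have e2 : (E ^ (-n)) (p (n + 1)) = p 1 := (hE_endpoint n).2
      rw [e1, e2, hl_p0, hl_p1, (hG_q (n + 1)).1, (hG_q n).2]
  -- per-piece membership of values
  have hEmono : ∀ n : ℤ, StrictMono ⇑(E ^ n) := perm_zpow_strictMono E hE1 hEinv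
  have hGmono : ∀ n : ℤ, StrictMono ⇑(G ^ n) := perm_zpow_strictMono G hG1 hGinv
  have hmapsto : ∀ (n : ℤ) (x : ℝ), x ∈ Icc (p n) (p (n + 1)) →
      (E ^ (-n)) x ∈ Icc (p 0) (p 1) := by
    intro n x hx
    constructor
    · rw [← (hE_endpoint n).1]; exact (hEmono (-n)).monotone hx.1
    · rw [← (hE_endpoint n).2]; exact (hEmono (-n)).monotone hx.2
  have hpiece_mem : ∀ (n : ℤ) (x : ℝ), x ∈ Icc (p n) (p (n + 1)) →
      h x ∈ Icc (q (n + 1)) (q n) := by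
    intro n x hx
    rw [hL1 n x hx]
    have hu := hmapsto n x hx
    constructor
    · rw [← (hG_q n).2]
      apply (hGmono n).monotone
      rw [← hl_p1]
      exact hl_anti.antitone hu.2
    · rw [← (hG_q n).1]
      apply (hGmono n).monotone
      rw [← hl_p0]
      exact hl_anti.antitone hu.1
  have hpiece_anti : ∀ n : ℤ, StrictAntiOn h (Icc (p n) (p (n + 1))) := by
    intro n x hx y hy hxy
    rw [hL1 n x hx, hL1 n y hy]
    exact hGmono n (hl_anti (hEmono (-n) hxy))
  have hvalp : ∀ n : ℤ, h (p n) = q n := by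
    intro n
    rw [hL1 n (p n) ⟨le_rfl, (hpmono (by omega : n < n + 1)).le⟩, (hE_endpoint n).1, hl_p0,
      (hG_q n).1]
  -- global strict anti
  have hanti : StrictAntiOn h (Icc a b) := by
    intro x hx y hy hxy
    rcases eq_or_lt_of_le hx.1 with hxa | hxa
    · -- x = a
      rw [← hxa, hha]
      rcases eq_or_lt_of_le hy.2 with hyb | hyb
      · rw [hyb, hhb]; exact hcd
      · have hyIoo : y ∈ Ioo a b := ⟨hxa.symm ▸ hxy, hyb⟩
        have hv := hpiece_mem (N y) y ⟨hN1 y hyIoo, (hN2 y hyIoo).le⟩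
        exact lt_of_le_of_lt hv.2 (hqmem (N y)).2
    · rcases eq_or_lt_of_le hy.2 with hyb | hyb
      · -- y = b
        rw [hyb, hhb]
        have hxIoo : x ∈ Ioo a b := ⟨hxa, hyb ▸ hxy⟩
        have hv := hpiece_mem (N x) x ⟨hN1 x hxIoo, (hN2 x hxIoo).le⟩
        exact lt_of_lt_of_le (hqmem (N x + 1)).1 hv.1
      · -- both interior
        have hxIoo : x ∈ Ioo a b := ⟨hxa, lt_trans hxy hyb⟩
        have hyIoo : y ∈ Ioo a b := ⟨lt_trans hxa hxy, hyb⟩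
        set m := N x with hmdef
        set n := N y with hndef
        have hmn : m ≤ n := by
          by_contra hc
          push_neg at hc
          have h1 : p (n + 1) ≤ p m := hpmono.monotone (by omega)
          have := hN1 x hxIoo
          have := hN2 y hyIoo
          linarith
        rcases eq_or_lt_of_le hmn with heq | hlt
        · exact hpiece_anti m ⟨hN1 x hxIoo, (hN2 x hxIoo).le⟩
            (by rw [heq]; exact ⟨hN1 y hyIoo, (hN2 y hyIoo).le⟩) hxy
        · have h1 : h (p (m + 1)) < h x :=
            hpiece_anti m ⟨hN1 x hxIoo, (hN2 x hxIoo).le⟩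
              ⟨(hpmono (by omega : m < m + 1)).le, le_rfl⟩ (hN2 x hxIoo)
          have h2 : h y ≤ q n := (hpiece_mem n y ⟨hN1 y hyIoo, (hN2 y hyIoo).le⟩).2
          have h3 : q n ≤ q (m + 1) := hqanti.antitone (by omega)
          rw [hvalp (m + 1)] at h1
          linarith
  -- image
  have himage : h '' Icc a b = Icc c d := by
    apply Subset.antisymm
    · rintro _ ⟨x, hx, rfl⟩
      rcases eq_or_lt_of_le hx.1 with hxa | hxa
      · rw [← hxa, hha]; exact right_mem_Icc.2 hcd.le
      rcases eq_or_lt_of_le hx.2 with hxb | hxb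
      · rw [hxb, hhb]; exact left_mem_Icc.2 hcd.le
      · have hxIoo : x ∈ Ioo a b := ⟨hxa, hxb⟩
        have hv := hpiece_mem (N x) x ⟨hN1 x hxIoo, (hN2 x hxIoo).le⟩
        exact ⟨(hqmem (N x + 1)).1.le.trans hv.1, hv.2.trans (hqmem (N x)).2.le⟩
    · intro y hy
      rcases eq_or_lt_of_le hy.1 with h1 | h1
      · exact ⟨b, right_mem_Icc.2 hab.le, by rw [hhb, h1]⟩
      rcases eq_or_lt_of_le hy.2 with h2 | h2
      · exact ⟨a, left_mem_Icc.2 hab.le, by rw [hha, h2]⟩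
      · -- interior, find piece for y in q-orbit
        have hex : ∃ n : ℤ, y ≤ q n := by
          by_contra hc
          push_neg at hc
          have hh1 : (⨆ n, q n) ≤ y := ciSup_le fun n => (hc n).le
          rw [hqsup] at hh1
          exact absurd h2 (not_lt.2 hh1)
        have hex2 : ∃ m : ℤ, q m < y := by
          by_contra hc
          push_neg at hc
          have hh1 : y ≤ ⨅ n, q n := le_ciInf hc
          rw [hqinf] at hh1
          exact absurd h1 (not_lt.2 hh1)
        obtain ⟨m, hm⟩ := hex2
        obtain ⟨n, hn, hmax⟩ := Int.exists_greatest_of_bdd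
          (⟨m, fun z hz => by
            by_contra hzc
            push_neg at hzc
            have : q z ≤ q m := hqanti.antitone (by omega)
            linarith⟩ : ∃ b : ℤ, ∀ z : ℤ, y ≤ q z → z ≤ b) hex
        have hn2 : q (n + 1) < y := by
          by_contra hc
          push_neg at hc
          exact absurd (hmax (n + 1) hc) (by omega)
        -- invert the piece
        have hu' : (G ^ (-n)) y ∈ Icc (q 1) (q 0) := by
          constructor
          · rw [← (hG_q n).2] at hn2
            have := (hGmono (-n)).monotone hn2.le
            rwa [← perm_zpow_add_apply, neg_add_cancel, zpow_zero, Equiv.Perm.coe_one, id_eq]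
              at this
          · rw [← (hG_q n).1] at hn
            have := (hGmono (-n)).monotone hn
            rwa [← perm_zpow_add_apply, neg_add_cancel, zpow_zero, Equiv.Perm.coe_one, id_eq]
              at this
        obtain ⟨u, hu, hlu⟩ := hl_surj _ hu'
        refine ⟨(E ^ n) u, ?_, ?_⟩
        · have hx1 : p n ≤ (E ^ n) u := by
            have := (hEmono n).monotone hu.1
            rwa [show (E ^ n) (p 0) = p n from by
              show (E ^ n) ((E ^ (0:ℤ)) _) = _; rw [← perm_zpow_add_apply, add_zero]] at this
          have hx2 : (E ^ n) u ≤ p (n + 1) := by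
            have := (hEmono n).monotone hu.2
            rwa [show (E ^ n) (p 1) = p (n + 1) from by
              show (E ^ n) ((E ^ (1:ℤ)) _) = (E ^ (n + 1)) _
              rw [← perm_zpow_add_apply]] at this
          exact ⟨(hpmem n).1.le.trans hx1, hx2.trans (hpmem (n + 1)).2.le⟩
        · have hx1 : p n ≤ (E ^ n) u := by
            have := (hEmono n).monotone hu.1
            rwa [show (E ^ n) (p 0) = p n from by
              show (E ^ n) ((E ^ (0:ℤ)) _) = _; rw [← perm_zpow_add_apply, add_zero]] at this
          have hx2 : (E ^ n) u ≤ p (n + 1) := by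
            have := (hEmono n).monotone hu.2
            rwa [show (E ^ n) (p 1) = p (n + 1) from by
              show (E ^ n) ((E ^ (1:ℤ)) _) = (E ^ (n + 1)) _
              rw [← perm_zpow_add_apply]] at this
          rw [hL1 n _ ⟨hx1, hx2⟩]
          have : (E ^ (-n)) ((E ^ n) u) = u := by
            rw [← perm_zpow_add_apply, neg_add_cancel, zpow_zero, Equiv.Perm.coe_one, id_eq]
          rw [this, hlu, ← perm_zpow_add_apply, add_neg_cancel, zpow_zero,
            Equiv.Perm.coe_one, id_eq]
  -- commutation
  have hcomm : ∀ x ∈ Icc a b, h (f x) = F (h x) := by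
    intro x hx
    rcases eq_or_lt_of_le hx.1 with hxa | hxa
    · rw [← hxa, hfa, hha, hFd]
    rcases eq_or_lt_of_le hx.2 with hxb | hxb
    · rw [hxb, hfb, hhb, hFc]
    · have hxIoo : x ∈ Ioo a b := ⟨hxa, hxb⟩
      set n := N x with hndef
      have hxp : x ∈ Icc (p n) (p (n + 1)) := ⟨hN1 x hxIoo, (hN2 x hxIoo).le⟩
      have hfx : f x = E x := (hEIcc x hx).symm
      have hfx_mem : E x ∈ Icc (p (n + 1)) (p (n + 2)) := by
        constructor
        · rw [hpstep n]; exact hE1.monotone hxp.1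
        · rw [show n + 2 = (n + 1) + 1 by ring, hpstep (n + 1)]
          exact hE1.monotone hxp.2
      rw [hfx, hL1 (n + 1) (E x) (by rwa [show n + 1 + 1 = n + 2 by ring])]
      have e1 : (E ^ (-(n + 1))) (E x) = (E ^ (-n)) x := by
        show (E ^ (-(n + 1))) ((E ^ (1:ℤ)) x) = _
        rw [← perm_zpow_add_apply, show -(n + 1) + 1 = -n by ring]
      rw [e1]
      have e2 : (G ^ (n + 1)) (l ((E ^ (-n)) x)) = G ((G ^ n) (l ((E ^ (-n)) x))) := by
        show (G ^ (n + 1)) _ = (G ^ (1:ℤ)) ((G ^ n) _)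
        rw [← perm_zpow_add_apply, add_comm]
      rw [e2, ← hL1 n x hxp]
      have hhx_mem : h x ∈ Icc c d := by
        have hv := hpiece_mem n x hxp
        exact ⟨(hqmem (n + 1)).1.le.trans hv.1, hv.2.trans (hqmem n).2.le⟩
      rw [hGIcc _ hhx_mem]
  exact ⟨h, hanti, himage, hha, hhb, hcomm⟩

lemma conj_down (hab : a < b) (hcd : c < d) {f F : ℝ → ℝ}
    (hf_mono : StrictMonoOn f (Icc a b)) (hf_surj : SurjOn f (Icc a b) (Icc a b))
    (hfa : f a = a) (hfb : f b = b) (hf_pull : ∀ x ∈ Ioo a b, f x < x)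
    (hF_mono : StrictMonoOn F (Icc c d)) (hF_surj : SurjOn F (Icc c d) (Icc c d))
    (hFc : F c = c) (hFd : F d = d) (hF_push : ∀ y ∈ Ioo c d, y < F y) :
    ∃ h : ℝ → ℝ, StrictAntiOn h (Icc a b) ∧ h '' Icc a b = Icc c d ∧
      h a = d ∧ h b = c ∧ ∀ x ∈ Icc a b, h (f x) = F (h x) := by
  set f' : ℝ → ℝ := fun x => a + b - f (a + b - x) with hf'def
  set F' : ℝ → ℝ := fun y => c + d - F (c + d - y) with hF'def
  have hrefl : ∀ x, x ∈ Icc a b ↔ a + b - x ∈ Icc a b := by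
    intro x; constructor <;> (intro hx; constructor <;> [linarith [hx.2]; linarith [hx.1]])
  have hreflcd : ∀ y, y ∈ Icc c d ↔ c + d - y ∈ Icc c d := by
    intro y; constructor <;> (intro hy; constructor <;> [linarith [hy.2]; linarith [hy.1]])
  have hf'_mono : StrictMonoOn f' (Icc a b) := by
    intro x hx y hy hxy
    simp only [hf'def]
    have := hf_mono ((hrefl y).1 hy) ((hrefl x).1 hx) (by linarith)
    linarith
  have hf'_surj : SurjOn f' (Icc a b) (Icc a b) := by
    intro y hy
    obtain ⟨x, hx, hfx⟩ := hf_surj ((hrefl y).1 hy)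
    exact ⟨a + b - x, (hrefl x).1 hx, by simp only [hf'def]; rw [show a + b - (a + b - x) = x by ring, hfx]; ring⟩
  have hf'a : f' a = a := by simp only [hf'def]; rw [show a + b - a = b by ring, hfb]; ring
  have hf'b : f' b = b := by simp only [hf'def]; rw [show a + b - b = a by ring, hfa]; ring
  have hf'_push : ∀ x ∈ Ioo a b, x < f' x := by
    intro x hx
    have hm : a + b - x ∈ Ioo a b := ⟨by linarith [hx.2], by linarith [hx.1]⟩
    have := hf_pull _ hm
    simp only [hf'def]; linarith
  have hF'_mono : StrictMonoOn F' (Icc c d) := by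
    intro x hx y hy hxy
    simp only [hF'def]
    have := hF_mono ((hreflcd y).1 hy) ((hreflcd x).1 hx) (by linarith)
    linarith
  have hF'_surj : SurjOn F' (Icc c d) (Icc c d) := by
    intro y hy
    obtain ⟨x, hx, hfx⟩ := hF_surj ((hreflcd y).1 hy)
    exact ⟨c + d - x, (hreflcd x).1 hx, by simp only [hF'def]; rw [show c + d - (c + d - x) = x by ring, hfx]; ring⟩
  have hF'c : F' c = c := by simp only [hF'def]; rw [show c + d - c = d by ring, hFd]; ring
  have hF'd : F' d = d := by simp only [hF'def]; rw [show c + d - d = c by ring, hFc]; ring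
  have hF'_pull : ∀ y ∈ Ioo c d, F' y < y := by
    intro y hy
    have hm : c + d - y ∈ Ioo c d := ⟨by linarith [hy.2], by linarith [hy.1]⟩
    have := hF_push _ hm
    simp only [hF'def]; linarith
  obtain ⟨h0, h0anti, h0img, h0a, h0b, h0comm⟩ :=
    conj_up hab hcd hf'_mono hf'_surj hf'a hf'b hf'_push hF'_mono hF'_surj hF'c hF'd hF'_pull
  refine ⟨fun x => c + d - h0 (a + b - x), ?_, ?_, ?_, ?_, ?_⟩
  · intro x hx y hy hxy
    show c + d - h0 (a + b - y) < c + d - h0 (a + b - x)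
    have := h0anti ((hrefl y).1 hy) ((hrefl x).1 hx) (by linarith)
    linarith
  · ext y
    constructor
    · rintro ⟨x, hx, rfl⟩
      have hmem : h0 (a + b - x) ∈ Icc c d := h0img ▸ mem_image_of_mem h0 ((hrefl x).1 hx)
      show c + d - h0 (a + b - x) ∈ Icc c d
      exact ⟨by linarith [hmem.2], by linarith [hmem.1]⟩
    · intro hy
      have : c + d - y ∈ Icc c d := (hreflcd y).1 hy
      rw [← h0img] at this
      obtain ⟨x, hx, hfx⟩ := this
      exact ⟨a + b - x, (hrefl x).1 hx, by
        show c + d - h0 (a + b - (a + b - x)) = y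
        rw [show a + b - (a + b - x) = x by ring, hfx]; ring⟩
  · show c + d - h0 (a + b - a) = d
    rw [show a + b - a = b by ring, h0b]; ring
  · show c + d - h0 (a + b - b) = c
    rw [show a + b - b = a by ring, h0a]; ring
  · intro x hx
    have hm : a + b - x ∈ Icc a b := (hrefl x).1 hx
    have hc := h0comm _ hm
    have e1 : f' (a + b - x) = a + b - f x := by
      simp only [hf'def]; rw [show a + b - (a + b - x) = x by ring]
    rw [e1] at hc
    -- hc : h0 (a + b - f x) = F' (h0 (a + b - x))
    simp only [hF'def] at hc
    rw [show a + b - f x = a + b - f x from rfl] at hc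
    show c + d - h0 (a + b - f x) = F (c + d - h0 (a + b - x))
    linarith [hc]


set_option maxHeartbeats 1600000 in
/-- If `g` is an orientation-preserving homeomorphism of `[0,π]` whose fixed-point set is the
finite set `φ_{-k} = 0 < … < φ_0 < … < φ_k = π`, and for each `0 ≤ i < k` the points of the
two intervals `(φ_{-i-1}, φ_{-i})` and `(φ_i, φ_{i+1})` move under `g` either both toward
`φ_0` or both away from `φ_0`, then there is an orientation-reversing homeomorphism `h` of
`[0,π]` with `g = h ∘ h`, whose unique fixed point is `φ_0`. -/
theorem stmt_0 (g : ℝ → ℝ) (k : ℕ) (φ : ℤ → ℝ)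
    (hg_cont : ContinuousOn g (Set.Icc 0 π))
    (hg_mono : StrictMonoOn g (Set.Icc 0 π))
    (hg_surj : g '' Set.Icc 0 π = Set.Icc 0 π)
    (hφ_mono : ∀ i j : ℤ, -(k : ℤ) ≤ i → i < j → j ≤ (k : ℤ) → φ i < φ j)
    (hφ_bot : φ (-(k : ℤ)) = 0) (hφ_top : φ (k : ℤ) = π)
    (hfix : ∀ x ∈ Set.Icc (0:ℝ) π,
      (g x = x ↔ ∃ i : ℤ, -(k : ℤ) ≤ i ∧ i ≤ (k : ℤ) ∧ x = φ i))
    (halt : ∀ i : ℤ, 0 ≤ i → i < (k : ℤ) →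
       ((∀ x ∈ Set.Ioo (φ (-i - 1)) (φ (-i)), x < g x) ∧
           (∀ x ∈ Set.Ioo (φ i) (φ (i + 1)), g x < x)) ∨
        ((∀ x ∈ Set.Ioo (φ (-i - 1)) (φ (-i)), g x < x) ∧
           (∀ x ∈ Set.Ioo (φ i) (φ (i + 1)), x < g x))) :
    ∃ h : ℝ → ℝ, ContinuousOn h (Set.Icc 0 π) ∧ StrictAntiOn h (Set.Icc 0 π) ∧
      h '' Set.Icc 0 π = Set.Icc 0 π ∧
      (∀ x ∈ Set.Icc (0:ℝ) π, h (h x) = g x) ∧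
      h (φ 0) = φ 0 ∧
      (∀ x ∈ Set.Icc (0:ℝ) π, h x = x → x = φ 0) := by
  classical
  have hπ : (0:ℝ) < π := Real.pi_pos
  have hk1 : 1 ≤ (k:ℤ) := by
    by_contra hc
    have hk0 : (k:ℤ) = 0 := by omega
    rw [hk0] at hφ_bot hφ_top
    simp only [neg_zero] at hφ_bot
    rw [hφ_bot] at hφ_top
    linarith
  have hφ_le : ∀ i j : ℤ, -(k : ℤ) ≤ i → i ≤ j → j ≤ (k : ℤ) → φ i ≤ φ j := by
    intro i j h1 h2 h3
    rcases eq_or_lt_of_le h2 with h | h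
    · rw [h]
    · exact (hφ_mono i j h1 h h3).le
  have hφmem : ∀ i : ℤ, -(k:ℤ) ≤ i → i ≤ (k:ℤ) → φ i ∈ Set.Icc (0:ℝ) π := by
    intro i h1 h2
    exact ⟨hφ_bot ▸ hφ_le (-(k:ℤ)) i le_rfl h1 h2, hφ_top ▸ hφ_le i (k:ℤ) h1 h2 le_rfl⟩
  have hgfix : ∀ i : ℤ, -(k:ℤ) ≤ i → i ≤ (k:ℤ) → g (φ i) = φ i := fun i h1 h2 =>
    (hfix _ (hφmem i h1 h2)).2 ⟨i, h1, h2, rfl⟩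
  have hg0 : g 0 = 0 := by
    rw [← hφ_bot]; exact hgfix _ le_rfl (by omega)
  have hφ0mem : φ 0 ∈ Set.Icc (0:ℝ) π := hφmem 0 (by omega) (by omega)
  have hφ0pos : 0 < φ 0 := by
    rw [← hφ_bot]; exact hφ_mono _ _ le_rfl (by omega) (by omega)
  have hφ0ltπ : φ 0 < π := by
    rw [← hφ_top]; exact hφ_mono _ _ (by omega) (by omega) le_rfl
  have hgφ0 : g (φ 0) = φ 0 := hgfix 0 (by omega) (by omega)
  -- subinterval invariance
  have hsub : ∀ u v : ℝ, u ∈ Set.Icc (0:ℝ) π → v ∈ Set.Icc (0:ℝ) π → g u = u → g v = v →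
      u < v → StrictMonoOn g (Set.Icc u v) ∧ Set.SurjOn g (Set.Icc u v) (Set.Icc u v) := by
    intro u v hu hv hgu hgv huv
    have hss : Set.Icc u v ⊆ Set.Icc (0:ℝ) π := Set.Icc_subset_Icc hu.1 hv.2
    refine ⟨hg_mono.mono hss, ?_⟩
    intro y hy
    have hymem : y ∈ Set.Icc (0:ℝ) π := hss hy
    have : y ∈ g '' Set.Icc (0:ℝ) π := by rw [hg_surj]; exact hymem
    obtain ⟨x, hx, hgx⟩ := this
    refine ⟨x, ⟨?_, ?_⟩, hgx⟩
    · by_contra hc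
      push_neg at hc
      have h1 : g x < g u := hg_mono hx (hss (Set.left_mem_Icc.2 huv.le)) hc
      rw [hgu, hgx] at h1
      linarith [hy.1]
    · by_contra hc
      push_neg at hc
      have h1 : g v < g x := hg_mono (hss (Set.right_mem_Icc.2 huv.le)) hx hc
      rw [hgv, hgx] at h1
      linarith [hy.2]
  -- the conjugating maps on each pair of pieces
  have hpieces : ∀ i : ℤ, 0 ≤ i → i < (k:ℤ) → ∃ h : ℝ → ℝ,
      StrictAntiOn h (Set.Icc (φ (-i - 1)) (φ (-i))) ∧
      h '' Set.Icc (φ (-i - 1)) (φ (-i)) = Set.Icc (φ i) (φ (i + 1)) ∧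
      h (φ (-i - 1)) = φ (i + 1) ∧ h (φ (-i)) = φ i ∧
      ∀ x ∈ Set.Icc (φ (-i - 1)) (φ (-i)), h (g x) = g (h x) := by
    intro i h0i hik
    have hab : φ (-i - 1) < φ (-i) := hφ_mono _ _ (by omega) (by omega) (by omega)
    have hcd : φ i < φ (i + 1) := hφ_mono _ _ (by omega) (by omega) (by omega)
    obtain ⟨hm1, hs1⟩ := hsub _ _ (hφmem _ (by omega) (by omega)) (hφmem _ (by omega) (by omega))
      (hgfix _ (by omega) (by omega)) (hgfix _ (by omega) (by omega)) hab
    obtain ⟨hm2, hs2⟩ := hsub _ _ (hφmem _ (by omega) (by omega)) (hφmem _ (by omega) (by omega))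
      (hgfix _ (by omega) (by omega)) (hgfix _ (by omega) (by omega)) hcd
    rcases halt i h0i hik with ⟨hl, hr⟩ | ⟨hl, hr⟩
    · exact conj_up hab hcd hm1 hs1 (hgfix _ (by omega) (by omega)) (hgfix _ (by omega) (by omega))
        hl hm2 hs2 (hgfix _ (by omega) (by omega)) (hgfix _ (by omega) (by omega)) hr
    · exact conj_down hab hcd hm1 hs1 (hgfix _ (by omega) (by omega))
        (hgfix _ (by omega) (by omega)) hl hm2 hs2 (hgfix _ (by omega) (by omega))
        (hgfix _ (by omega) (by omega)) hr
  choose! H hH1 hH2 hH3 hH4 hH5 using hpieces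
  -- floor for the left half
  have hfloorA : ∀ x : ℝ, 0 ≤ x → x < φ 0 →
      ∃ i : ℤ, 0 ≤ i ∧ i < (k:ℤ) ∧ φ (-i - 1) ≤ x ∧ x < φ (-i) := by
    intro x hx0 hxφ
    have hbdd : ∃ b : ℤ, ∀ z : ℤ, (-(k:ℤ) ≤ z ∧ z ≤ 0 ∧ φ z ≤ x) → z ≤ b :=
      ⟨0, fun z hz => hz.2.1⟩
    have hinh : ∃ z : ℤ, -(k:ℤ) ≤ z ∧ z ≤ 0 ∧ φ z ≤ x :=
      ⟨-(k:ℤ), le_rfl, by omega, by rw [hφ_bot]; exact hx0⟩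
    obtain ⟨j, hj, hmax⟩ := Int.exists_greatest_of_bdd hbdd hinh
    have hj0 : j < 0 := by
      rcases eq_or_lt_of_le hj.2.1 with h | h
      · rw [h] at hj; exact absurd hj.2.2 (not_le.2 hxφ)
      · exact h
    refine ⟨-j - 1, by omega, by omega, ?_, ?_⟩
    · rw [show -(-j - 1) - 1 = j by ring]; exact hj.2.2
    · rw [show -(-j - 1) = j + 1 by ring]
      by_contra hc
      push_neg at hc
      exact absurd (hmax (j + 1) ⟨by omega, by omega, hc⟩) (by omega)
  choose! I hI1 hI2 hI3 hI4 using hfloorA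
  -- definition of the left-half map
  set hA : ℝ → ℝ := fun x => if 0 ≤ x ∧ x < φ 0 then H (I x) x else φ 0 with hAdef
  have hA_φ0 : hA (φ 0) = φ 0 := by
    simp only [hAdef, lt_irrefl, and_false, if_false]
  -- the piece-evaluation lemma
  have hApiece : ∀ i : ℤ, 0 ≤ i → i < (k:ℤ) →
      ∀ x ∈ Set.Icc (φ (-i - 1)) (φ (-i)), hA x = H i x := by
    intro i h0i hik x hx
    have hx0 : 0 ≤ x := le_trans (hφmem (-i-1) (by omega) (by omega)).1 hx.1
    have hxφ0 : x ≤ φ 0 := le_trans hx.2 (hφ_le (-i) 0 (by omega) (by omega) (by omega))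
    rcases lt_or_eq_of_le hxφ0 with hlt | heq
    · simp only [hAdef]
      rw [if_pos (⟨hx0, hlt⟩ : 0 ≤ x ∧ x < φ 0)]
      have hj1 := hI1 x hx0 hlt
      have hj2 := hI2 x hx0 hlt
      have hj3 := hI3 x hx0 hlt
      have hj4 := hI4 x hx0 hlt
      rcases lt_or_eq_of_le hx.2 with hxlt | hxeq
      · have heqij : I x = i := by
          by_contra hne
          rcases lt_or_gt_of_ne hne with hlt2 | hlt2
          ·
            have h5 : φ (-i) ≤ φ (-(I x) - 1) := hφ_le _ _ (by omega) (by omega) (by omega)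
            linarith [hx.1, hx.2, hj3, hj4, hxlt]
          · have h5 : φ (-(I x)) ≤ φ (-i - 1) := hφ_le _ _ (by omega) (by omega) (by omega)
            linarith [hx.1, hx.2, hj3, hj4, hxlt]
        rw [heqij]
      · -- x = φ (-i)
        have hi1 : 1 ≤ i := by
          by_contra hc
          have : i = 0 := by omega
          rw [this] at hxeq
          simp only [neg_zero] at hxeq
          rw [hxeq] at hlt
          exact lt_irrefl _ hlt
        have hji : I x = i - 1 := by
          have hlt1 : I x < i := by
            by_contra hc
            push_neg at hc  -- i ≤ I x
            have h5 : φ (-(I x)) ≤ φ (-i) := hφ_le _ _ (by omega) (by omega) (by omega)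
            rw [← hxeq] at h5
            linarith
          have hge : i - 1 ≤ I x := by
            by_contra hc
            push_neg at hc  -- I x < i - 1, so -(I x) - 1 ≥ -i + 1
            have h5 : φ (-i + 1) ≤ φ (-(I x) - 1) := hφ_le _ _ (by omega) (by omega) (by omega)
            have h6 : φ (-i) < φ (-i + 1) := hφ_mono _ _ (by omega) (by omega) (by omega)
            rw [← hxeq] at h6
            linarith
          omega
        have e1 : H (I x) x = φ (I x + 1) := by
          have := hH3 (I x) (by omega) (by omega)
          rw [show -(I x) - 1 = -i from by omega, ← hxeq] at this
          exact this
        have e2 : H i x = φ i := by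
          have := hH4 i h0i hik
          rw [← hxeq] at this
          exact this
        rw [e1, e2, show I x + 1 = i from by omega]
    · -- x = φ 0 : then i = 0
      have hi0 : i = 0 := by
        by_contra hne
        have h5 : φ (-i) ≤ φ (-1) := hφ_le _ _ (by omega) (by omega) (by omega)
        have h6 : φ (-1) < φ 0 := hφ_mono _ _ (by omega) (by omega) (by omega)
        rw [heq] at hx
        linarith [hx.2]
      rw [heq, hA_φ0, hi0]
      have hh := hH4 0 (by omega) (by omega)
      simp only [neg_zero] at hh
      exact hh.symm
  -- helper: weak antitone on pieces
  have hHle : ∀ i : ℤ, 0 ≤ i → i < (k:ℤ) → ∀ x ∈ Set.Icc (φ (-i - 1)) (φ (-i)),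
      ∀ y ∈ Set.Icc (φ (-i - 1)) (φ (-i)), x ≤ y → H i y ≤ H i x := by
    intro i h0i hik x hx y hy hxy
    rcases eq_or_lt_of_le hxy with h | h
    · rw [h]
    · exact (hH1 i h0i hik hx hy h).le
  -- piece data for interior points
  have hIdata : ∀ x : ℝ, 0 ≤ x → x < φ 0 →
      x ∈ Set.Icc (φ (-(I x) - 1)) (φ (-(I x))) ∧ 0 ≤ I x ∧ I x < (k:ℤ) := by
    intro x h1 h2
    exact ⟨⟨hI3 x h1 h2, (hI4 x h1 h2).le⟩, hI1 x h1 h2, hI2 x h1 h2⟩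
  have hA_0 : hA 0 = π := by
    have h0mem : (0:ℝ) ∈ Set.Icc (φ (-((k:ℤ) - 1) - 1)) (φ (-((k:ℤ) - 1))) := by
      constructor
      · rw [show -((k:ℤ) - 1) - 1 = -(k:ℤ) by ring, hφ_bot]
      · rw [← hφ_bot]; exact (hφ_mono _ _ le_rfl (by omega) (by omega)).le
    rw [hApiece ((k:ℤ) - 1) (by omega) (by omega) 0 h0mem]
    have := hH3 ((k:ℤ) - 1) (by omega) (by omega)
    rw [show -((k:ℤ) - 1) - 1 = -(k:ℤ) by ring, hφ_bot] at this
    rw [this, show (k:ℤ) - 1 + 1 = (k:ℤ) by ring, hφ_top]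
  -- bounds of piece values
  have hAval : ∀ x : ℝ, 0 ≤ x → x < φ 0 →
      hA x ∈ Set.Icc (φ (I x)) (φ (I x + 1)) ∧ φ (I x) < hA x := by
    intro x h1 h2
    obtain ⟨hxmem, h0I, hIk⟩ := hIdata x h1 h2
    have he : hA x = H (I x) x := hApiece (I x) h0I hIk x hxmem
    have hb : φ (-(I x)) ∈ Set.Icc (φ (-(I x) - 1)) (φ (-(I x))) :=
      Set.right_mem_Icc.2 (hφ_mono _ _ (by omega) (by omega) (by omega)).le
    have hlt : H (I x) (φ (-(I x))) < H (I x) x := hH1 (I x) h0I hIk hxmem hb (hI4 x h1 h2)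
    rw [hH4 (I x) h0I hIk] at hlt
    have himg : H (I x) x ∈ Set.Icc (φ (I x)) (φ (I x + 1)) := by
      rw [← hH2 (I x) h0I hIk]
      exact Set.mem_image_of_mem _ hxmem
    exact ⟨he ▸ himg, he ▸ hlt⟩
  -- strict antitonicity of hA on [0, φ 0]
  have hA_anti : StrictAntiOn hA (Set.Icc 0 (φ 0)) := by
    intro x hx y hy hxy
    rcases eq_or_lt_of_le hy.2 with hyφ | hyφ
    · -- y = φ 0
      rw [hyφ, hA_φ0]
      have := (hAval x hx.1 (by rw [← hyφ]; exact hxy)).2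
      have h5 : φ 0 ≤ φ (I x) :=
        hφ_le _ _ (by omega) (hI1 x hx.1 (by rw [← hyφ]; exact hxy)) (by
          have := hI2 x hx.1 (by rw [← hyφ]; exact hxy); omega)
      linarith
    · -- both < φ 0
      have hxφ : x < φ 0 := lt_trans hxy hyφ
      obtain ⟨hxmem, h0i, hik⟩ := hIdata x hx.1 hxφ
      obtain ⟨hymem, h0j, hjk⟩ := hIdata y hy.1 hyφ
      have hex : hA x = H (I x) x := hApiece _ h0i hik x hxmem
      have hey : hA y = H (I y) y := hApiece _ h0j hjk y hymem
      have hij : I y ≤ I x := by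
        by_contra hc
        push_neg at hc  -- I x < I y
        have h5 : φ (-(I y)) ≤ φ (-(I x) - 1) := hφ_le _ _ (by omega) (by omega) (by omega)
        have := hI4 y hy.1 hyφ
        have := hI3 x hx.1 hxφ
        linarith
      rcases eq_or_lt_of_le hij with heq | hlt
      · rw [hex, hey, ← heq]
        exact hH1 (I y) h0j hjk (heq ▸ hxmem) hymem hxy
      · -- I y < I x
        have h1 : hA y ≤ φ (I y + 1) := by
          rw [hey]
          have := hHle (I y) h0j hjk (φ (-(I y) - 1))
            (Set.left_mem_Icc.2 (hφ_mono _ _ (by omega) (by omega) (by omega)).le) y hymem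
            (hI3 y hy.1 hyφ)
          rw [hH3 (I y) h0j hjk] at this
          exact this
        have h2 : φ (I y + 1) ≤ φ (I x) := hφ_le _ _ (by omega) (by omega) (by omega)
        have h3 : φ (I x) < hA x := (hAval x hx.1 hxφ).2
        linarith
  -- image of hA
  have hA_img : hA '' Set.Icc 0 (φ 0) = Set.Icc (φ 0) π := by
    apply Set.Subset.antisymm
    · rintro _ ⟨x, hx, rfl⟩
      rcases eq_or_lt_of_le hx.2 with hxφ | hxφ
      · rw [hxφ, hA_φ0]; exact ⟨le_rfl, hφ0ltπ.le⟩
      · obtain ⟨hv, _⟩ := hAval x hx.1 hxφ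
        have h0i := hI1 x hx.1 hxφ
        have hik := hI2 x hx.1 hxφ
        constructor
        · exact le_trans (hφ_le 0 (I x) (by omega) h0i (by omega)) hv.1
        · exact le_trans hv.2 (by rw [← hφ_top]; exact hφ_le _ _ (by omega) (by omega) le_rfl)
    · intro y hy
      rcases eq_or_lt_of_le hy.1 with h1 | h1
      · exact ⟨φ 0, ⟨hφ0pos.le, le_rfl⟩, by rw [hA_φ0, h1]⟩
      · -- φ 0 < y ≤ π : find the piece on the right side
        have hbdd : ∃ b : ℤ, ∀ z : ℤ, (0 ≤ z ∧ z ≤ (k:ℤ) ∧ φ z ≤ y) → z ≤ b :=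
          ⟨(k:ℤ), fun z hz => hz.2.1⟩
        have hinh : ∃ z : ℤ, 0 ≤ z ∧ z ≤ (k:ℤ) ∧ φ z ≤ y := ⟨0, le_rfl, by omega, h1.le⟩
        obtain ⟨m, hm, hmax⟩ := Int.exists_greatest_of_bdd hbdd hinh
        have hj : ∃ j : ℤ, 0 ≤ j ∧ j < (k:ℤ) ∧ φ j ≤ y ∧ y ≤ φ (j + 1) := by
          rcases eq_or_lt_of_le hm.2.1 with hmk | hmk
          · refine ⟨(k:ℤ) - 1, by omega, by omega, ?_, ?_⟩
            · refine le_trans (hφ_le ((k:ℤ)-1) (k:ℤ) (by omega) (by omega) le_rfl) ?_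
              rw [← hmk]; exact hm.2.2
            · rw [show (k:ℤ) - 1 + 1 = (k:ℤ) by ring, hφ_top]; exact hy.2
          · refine ⟨m, hm.1, by omega, hm.2.2, ?_⟩
            by_contra hc
            push_neg at hc
            exact absurd (hmax (m + 1) ⟨by omega, by omega, hc.le⟩) (by omega)
        obtain ⟨j, h0j, hjk, hy1, hy2⟩ := hj
        have : y ∈ H j '' Set.Icc (φ (-j - 1)) (φ (-j)) := by
          rw [hH2 j h0j hjk]; exact ⟨hy1, hy2⟩
        obtain ⟨x, hxmem, hxval⟩ := this
        refine ⟨x, ?_, ?_⟩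
        · constructor
          · exact le_trans (by rw [← hφ_bot]; exact hφ_le _ _ le_rfl (by omega) (by omega)) hxmem.1
          · exact le_trans hxmem.2 (hφ_le _ _ (by omega) (by omega) (by omega))
        · rw [hApiece j h0j hjk x hxmem, hxval]
  -- commutation for hA
  have hA_comm : ∀ x ∈ Set.Icc 0 (φ 0), hA (g x) = g (hA x) := by
    intro x hx
    rcases eq_or_lt_of_le hx.2 with hxφ | hxφ
    · rw [hxφ, hgφ0, hA_φ0, hgφ0]
    · obtain ⟨hxmem, h0i, hik⟩ := hIdata x hx.1 hxφ
      have hgmem : g x ∈ Set.Icc (φ (-(I x) - 1)) (φ (-(I x))) := by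
        have hss : Set.Icc (φ (-(I x) - 1)) (φ (-(I x))) ⊆ Set.Icc (0:ℝ) π :=
          Set.Icc_subset_Icc (hφmem _ (by omega) (by omega)).1 (hφmem _ (by omega) (by omega)).2
        constructor
        · rw [← hgfix (-(I x) - 1) (by omega) (by omega)]
          exact hg_mono.monotoneOn (hss (Set.left_mem_Icc.2
            (hφ_mono _ _ (by omega) (by omega) (by omega)).le)) (hss hxmem) hxmem.1
        · rw [← hgfix (-(I x)) (by omega) (by omega)]
          exact hg_mono.monotoneOn (hss hxmem) (hss (Set.right_mem_Icc.2
            (hφ_mono _ _ (by omega) (by omega) (by omega)).le)) hxmem.2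
      rw [hApiece (I x) h0i hik (g x) hgmem, hApiece (I x) h0i hik x hxmem]
      exact hH5 (I x) h0i hik x hxmem
  -- global map
  have hA_inj : Set.InjOn hA (Set.Icc 0 (φ 0)) := hA_anti.injOn
  set ψ : ℝ → ℝ := Function.invFunOn hA (Set.Icc 0 (φ 0)) with hψdef
  have hψex : ∀ y ∈ Set.Icc (φ 0) π, ∃ x ∈ Set.Icc 0 (φ 0), hA x = y := by
    intro y hy
    have : y ∈ hA '' Set.Icc 0 (φ 0) := by rw [hA_img]; exact hy
    obtain ⟨x, hx, hval⟩ := this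
    exact ⟨x, hx, hval⟩
  have hψmem : ∀ y ∈ Set.Icc (φ 0) π, ψ y ∈ Set.Icc 0 (φ 0) := fun y hy =>
    Function.invFunOn_mem (hψex y hy)
  have hψval : ∀ y ∈ Set.Icc (φ 0) π, hA (ψ y) = y := fun y hy =>
    Function.invFunOn_eq (hψex y hy)
  have hψleft : ∀ x ∈ Set.Icc 0 (φ 0), ψ (hA x) = x := fun x hx =>
    hA_inj.leftInvOn_invFunOn hx
  have hψlt : ∀ y, φ 0 < y → y ≤ π → ψ y < φ 0 := by
    intro y h1 h2
    have hm := hψmem y ⟨h1.le, h2⟩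
    rcases eq_or_lt_of_le hm.2 with h | h
    · exfalso
      have := hψval y ⟨h1.le, h2⟩
      rw [h, hA_φ0] at this
      linarith
    · exact h
  set h : ℝ → ℝ := fun x => if x ≤ φ 0 then hA x else g (ψ x) with hhdef
  have hval_le : ∀ x, x ≤ φ 0 → h x = hA x := by
    intro x hx; simp only [hhdef, if_pos hx]
  have hval_gt : ∀ x, φ 0 < x → h x = g (ψ x) := by
    intro x hx; simp only [hhdef, if_neg (not_le.2 hx)]
  have hhφ0 : h (φ 0) = φ 0 := by rw [hval_le _ le_rfl, hA_φ0]
  have hh0 : h 0 = π := by rw [hval_le _ hφ0pos.le, hA_0]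
  have hhπ : h π = 0 := by
    rw [hval_gt _ hφ0ltπ]
    have : ψ π = 0 := by
      have := hψleft 0 ⟨le_rfl, hφ0pos.le⟩
      rwa [hA_0] at this
    rw [this, hg0]
  -- lower-half values of h on the upper half
  have hupper : ∀ x, φ 0 < x → x ≤ π → h x < φ 0 ∧ 0 ≤ h x := by
    intro x h1 h2
    rw [hval_gt _ h1]
    have hm := hψmem x ⟨h1.le, h2⟩
    have hlt := hψlt x h1 h2
    have hmem : ψ x ∈ Set.Icc (0:ℝ) π := ⟨hm.1, le_trans hm.2 hφ0ltπ.le⟩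
    constructor
    · rw [← hgφ0]
      exact hg_mono hmem hφ0mem hlt
    · rw [← hg0]
      exact hg_mono.monotoneOn ⟨le_rfl, hπ.le⟩ hmem hm.1
  -- strict antitonicity
  have hanti : StrictAntiOn h (Set.Icc 0 π) := by
    intro x hx y hy hxy
    rcases le_or_gt x (φ 0) with hxφ | hxφ
    · rcases le_or_gt y (φ 0) with hyφ | hyφ
      · rw [hval_le _ hxφ, hval_le _ hyφ]
        exact hA_anti ⟨hx.1, hxφ⟩ ⟨hy.1, hyφ⟩ hxy
      · -- h y < φ 0 ≤ h x
        have h1 := (hupper y hyφ hy.2).1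
        have h2 : φ 0 ≤ h x := by
          rw [hval_le _ hxφ, ← hA_φ0]
          rcases eq_or_lt_of_le hxφ with he | hl
          · rw [he]
          · exact (hA_anti ⟨hx.1, hxφ⟩ ⟨hφ0pos.le, le_rfl⟩ hl).le
        linarith
    · have hyφ : φ 0 < y := lt_trans hxφ hxy
      rw [hval_gt _ hxφ, hval_gt _ hyφ]
      have hmx := hψmem x ⟨hxφ.le, hx.2⟩
      have hmy := hψmem y ⟨hyφ.le, hy.2⟩
      have hssx : ψ x ∈ Set.Icc (0:ℝ) π := ⟨hmx.1, le_trans hmx.2 hφ0ltπ.le⟩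
      have hssy : ψ y ∈ Set.Icc (0:ℝ) π := ⟨hmy.1, le_trans hmy.2 hφ0ltπ.le⟩
      apply hg_mono hssy hssx
      -- ψ y < ψ x
      by_contra hc
      push_neg at hc  -- ψ x ≤ ψ y
      have h1 : hA (ψ y) ≤ hA (ψ x) := by
        rcases eq_or_lt_of_le hc with he | hl
        · rw [he]
        · exact (hA_anti hmx hmy hl).le
      rw [hψval x ⟨hxφ.le, hx.2⟩, hψval y ⟨hyφ.le, hy.2⟩] at h1
      linarith
  -- image
  have himg : h '' Set.Icc 0 π = Set.Icc 0 π := by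
    apply Set.Subset.antisymm
    · rintro _ ⟨x, hx, rfl⟩
      rcases le_or_gt x (φ 0) with hxφ | hxφ
      · rw [hval_le _ hxφ]
        have : hA x ∈ Set.Icc (φ 0) π := by
          rw [← hA_img]; exact Set.mem_image_of_mem _ ⟨hx.1, hxφ⟩
        exact ⟨le_trans hφ0pos.le this.1, this.2⟩
      · have := hupper x hxφ hx.2
        exact ⟨this.2, le_trans this.1.le hφ0ltπ.le⟩
    · intro y hy
      rcases le_or_gt (φ 0) y with hyφ | hyφ
      · -- y in upper range: comes from hA
        have : y ∈ hA '' Set.Icc 0 (φ 0) := by rw [hA_img]; exact ⟨hyφ, hy.2⟩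
        obtain ⟨x, hx, hval⟩ := this
        exact ⟨x, ⟨hx.1, le_trans hx.2 hφ0ltπ.le⟩, by rw [hval_le _ hx.2, hval]⟩
      · -- y < φ 0 : y = g x₀ with x₀ < φ 0, take z = hA x₀
        have : y ∈ g '' Set.Icc (0:ℝ) π := by rw [hg_surj]; exact hy
        obtain ⟨x₀, hx₀, hgx₀⟩ := this
        have hx₀φ : x₀ < φ 0 := by
          by_contra hc
          push_neg at hc
          have : φ 0 ≤ g x₀ := by
            rw [← hgφ0]
            exact hg_mono.monotoneOn hφ0mem hx₀ hc
          rw [hgx₀] at this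
          linarith
        set z := hA x₀ with hzdef
        have hzmem : z ∈ Set.Icc (φ 0) π := by
          rw [← hA_img, hzdef]; exact Set.mem_image_of_mem _ ⟨hx₀.1, hx₀φ.le⟩
        have hzφ : φ 0 < z := by
          rcases eq_or_lt_of_le hzmem.1 with he | hl
          · exfalso
            have := hψleft x₀ ⟨hx₀.1, hx₀φ.le⟩
            have h2 : hA x₀ = hA (φ 0) := by rw [hA_φ0, ← hzdef, ← he]
            have := hA_inj ⟨hx₀.1, hx₀φ.le⟩ ⟨hφ0pos.le, le_rfl⟩ h2
            linarith
          · exact hl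
        refine ⟨z, ⟨le_trans hφ0pos.le hzmem.1, hzmem.2⟩, ?_⟩
        rw [hval_gt _ hzφ, hzdef, hψleft x₀ ⟨hx₀.1, hx₀φ.le⟩, hgx₀]
  -- h ∘ h = g
  have hsquare : ∀ x ∈ Set.Icc (0:ℝ) π, h (h x) = g x := by
    intro x hx
    rcases le_or_gt x (φ 0) with hxφ | hxφ
    · rw [hval_le _ hxφ]
      have hmem : hA x ∈ Set.Icc (φ 0) π := by
        rw [← hA_img]; exact Set.mem_image_of_mem _ ⟨hx.1, hxφ⟩
      rcases eq_or_lt_of_le hmem.1 with he | hl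
      · -- hA x = φ 0 forces x = φ 0
        have hxeq : x = φ 0 := by
          apply hA_inj ⟨hx.1, hxφ⟩ ⟨hφ0pos.le, le_rfl⟩
          rw [hA_φ0, ← he]
        rw [← he, hhφ0, hxeq, hgφ0]
      · rw [hval_gt _ hl, hψleft x ⟨hx.1, hxφ⟩]
    · rw [hval_gt _ hxφ]
      have hmem := hψmem x ⟨hxφ.le, hx.2⟩
      have hgmem : g (ψ x) ≤ φ 0 := by
        rw [← hgφ0]
        exact hg_mono.monotoneOn ⟨hmem.1, le_trans hmem.2 hφ0ltπ.le⟩ hφ0mem hmem.2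
      rw [hval_le _ hgmem]
      rw [hA_comm (ψ x) hmem, hψval x ⟨hxφ.le, hx.2⟩]
  -- unique fixed point
  have hfixuniq : ∀ x ∈ Set.Icc (0:ℝ) π, h x = x → x = φ 0 := by
    intro x hx hfx
    rcases le_or_gt x (φ 0) with hxφ | hxφ
    · have : φ 0 ≤ h x := by
        rw [hval_le _ hxφ, ← hA_φ0]
        rcases eq_or_lt_of_le hxφ with he | hl
        · rw [he]
        · exact (hA_anti ⟨hx.1, hxφ⟩ ⟨hφ0pos.le, le_rfl⟩ hl).le
      rw [hfx] at this
      linarith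
    · exfalso
      have := (hupper x hxφ hx.2).1
      rw [hfx] at this
      linarith
  -- continuity via global monotone extension
  have hcont : ContinuousOn h (Set.Icc 0 π) := by
    set hext : ℝ → ℝ := fun x => if 0 ≤ x ∧ x ≤ π then h x else π - x with hextdef
    have hexteq : ∀ x ∈ Set.Icc (0:ℝ) π, hext x = h x := by
      intro x hx; simp only [hextdef, if_pos (⟨hx.1, hx.2⟩ : 0 ≤ x ∧ x ≤ π)]
    have hmemh : ∀ x ∈ Set.Icc (0:ℝ) π, h x ∈ Set.Icc (0:ℝ) π := by
      intro x hx
      have : h x ∈ h '' Set.Icc 0 π := Set.mem_image_of_mem _ hx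
      rwa [himg] at this
    have hext_anti : StrictAnti hext := by
      intro x y hxy
      simp only [hextdef]
      by_cases hx : 0 ≤ x ∧ x ≤ π <;> by_cases hy : 0 ≤ y ∧ y ≤ π <;>
        simp only [hx, hy, and_self, if_true, if_false]
      · exact hanti ⟨hx.1, hx.2⟩ ⟨hy.1, hy.2⟩ hxy
      · have hyπ : π < y := by
          rcases lt_or_ge π y with hc | hc
          · exact hc
          · exact absurd ⟨le_trans hx.1 hxy.le, hc⟩ hy
        have := (hmemh x ⟨hx.1, hx.2⟩).1
        linarith
      · have hx0 : x < 0 := by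
          rcases lt_or_ge x 0 with hc | hc
          · exact hc
          · exact absurd ⟨hc, le_trans hxy.le hy.2⟩ hx
        have := (hmemh y ⟨hy.1, hy.2⟩).2
        linarith
      · rcases lt_or_ge x 0 with hx0 | hx0
        · rcases lt_or_ge y 0 with hy0 | hy0
          · linarith
          · have hyπ : π < y := by
              rcases lt_or_ge π y with hc | hc
              · exact hc
              · exact absurd ⟨hy0, hc⟩ hy
            linarith
        · have hxπ : π < x := by
            rcases lt_or_ge π x with hc | hc
            · exact hc
            · exact absurd ⟨hx0, hc⟩ hx
          linarith
    have hext_surj : Function.Surjective hext := by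
      intro y
      rcases le_or_gt 0 y with hy0 | hy0
      · rcases le_or_gt y π with hyπ | hyπ
        · have : y ∈ h '' Set.Icc 0 π := by rw [himg]; exact ⟨hy0, hyπ⟩
          obtain ⟨x, hx, hval⟩ := this
          exact ⟨x, by rw [hexteq x hx, hval]⟩
        · refine ⟨π - y, ?_⟩
          have hc : ¬(0 ≤ π - y ∧ π - y ≤ π) := by
            intro hc; linarith [hc.2]
          simp only [hextdef, if_neg hc]
          ring
      · refine ⟨π - y, ?_⟩
        have hc : ¬(0 ≤ π - y ∧ π - y ≤ π) := by
          intro hc; linarith [hc.1]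
        simp only [hextdef, if_neg hc]
        ring
    have hneg_mono : Monotone (fun x => -hext x) := fun x y hxy => by
      rcases eq_or_lt_of_le hxy with he | hl
      · rw [he]
      · exact (neg_lt_neg (hext_anti hl)).le
    have hneg_surj : Function.Surjective (fun x => -hext x) := by
      intro y
      obtain ⟨x, hx⟩ := hext_surj (-y)
      exact ⟨x, by show -hext x = y; rw [hx]; ring⟩
    have hcont_neg : Continuous (fun x => -hext x) :=
      Monotone.continuous_of_surjective hneg_mono hneg_surj
    have hcont_ext : Continuous hext := by
      have : hext = fun x => -(-hext x) := by funext x; ring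
      rw [this]
      exact hcont_neg.neg
    exact (hcont_ext.continuousOn).congr fun x hx => (hexteq x hx).symm
  exact ⟨h, hcont, hanti, himg, hsquare, hhφ0, hfixuniq⟩
end scratch
end

section
/- Let f : [0,π] → [0,π] be continuously differentiable with f(0) = 0, f(π) = π, and f'(φ) > 0 for all φ ∈ [0,π], and suppose f is not the identity map (equivalently, f' is not identically equal to 1). Then the double integral ∫₀^π ∫₀^{2π} log[1 − (1 − f'(φ)²)·sin²(β − φ)] dβ dφ is strictly negative. (Note that the hypotheses imply ∫₀^π f'(φ) dφ = π, and that the argument of the logarithm is strictly positive for all β, φ.) -/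
open Real MeasureTheory

lemma key_complex (r : ℝ) (hr : |r| < 1) :
    ∫ θ in (0:ℝ)..(2*π), Real.log (1 + 2*r*Real.cos θ + r^2) = 0 := by
  have hr1 := abs_lt.mp hr
  set F : ℂ → ℂ := fun z => Complex.log (1 + (r:ℂ) * z) with hF
  have hpos : ∀ z : ℂ, ‖z‖ ≤ 1 → (1 + (r:ℂ) * z) ∈ Complex.slitPlane := by
    intro z hz
    left
    have h1 : |((r:ℂ) * z).re| ≤ |r| := by
      calc |((r:ℂ) * z).re| ≤ ‖(r:ℂ) * z‖ := Complex.abs_re_le_norm _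
        _ = |r| * ‖z‖ := by simp
        _ ≤ |r| * 1 := by gcongr
        _ = |r| := mul_one _
    have h2 := (abs_le.mp h1).1
    simp only [Complex.add_re, Complex.one_re]
    linarith
  have hdiff : DiffContOnCl ℂ F (Metric.ball 0 1) := by
    apply DifferentiableOn.diffContOnCl
    rw [closure_ball (0:ℂ) one_ne_zero]
    intro z hz
    rw [Metric.mem_closedBall, dist_zero_right] at hz
    apply DifferentiableAt.differentiableWithinAt
    exact (Complex.differentiableAt_log (hpos z hz)).comp z (by fun_prop : DifferentiableAt ℂ (fun z : ℂ => 1 + (r:ℂ) * z) z)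
  have hint := hdiff.circleIntegral_sub_inv_smul (w := 0) (by simp)
  rw [circleIntegral] at hint
  simp only [sub_zero, deriv_circleMap, smul_eq_mul] at hint
  have hmap : ∀ θ : ℝ, circleMap 0 1 θ * Complex.I * ((circleMap 0 1 θ)⁻¹ * F (circleMap 0 1 θ))
      = Complex.I * F (circleMap 0 1 θ) := by
    intro θ
    have hne : circleMap 0 1 θ ≠ 0 := circleMap_ne_center one_ne_zero
    field_simp
  rw [intervalIntegral.integral_congr (fun θ _ => hmap θ)] at hint
  have hF0 : F 0 = 0 := by simp [hF]
  rw [hF0, mul_zero, intervalIntegral.integral_const_mul] at hint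
  have hintC : ∫ θ in (0:ℝ)..(2*π), F (circleMap 0 1 θ) = 0 :=
    (mul_eq_zero.mp hint).resolve_left Complex.I_ne_zero
  have habs : ∀ θ : ℝ, ‖circleMap 0 1 θ‖ ≤ 1 := by
    intro θ; rw [norm_circleMap_zero]; simp
  have hcont : Continuous fun θ : ℝ => F (circleMap 0 1 θ) := by
    rw [continuous_iff_continuousAt]
    intro θ
    have hg : Continuous fun θ : ℝ => 1 + (r:ℂ) * circleMap 0 1 θ :=
      continuous_const.add (continuous_const.mul (continuous_circleMap 0 1))
    exact ContinuousAt.comp (f := fun θ : ℝ => 1 + (r:ℂ) * circleMap 0 1 θ)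
      (g := Complex.log) (continuousAt_clog (hpos _ (habs θ))) hg.continuousAt
  have hii : IntervalIntegrable (fun θ : ℝ => F (circleMap 0 1 θ)) volume 0 (2*π) :=
    hcont.intervalIntegrable _ _
  have hre : ∫ θ in (0:ℝ)..(2*π), (F (circleMap 0 1 θ)).re = 0 := by
    have := Complex.reCLM.intervalIntegral_comp_comm hii
    rw [hintC] at this
    simpa using this
  have hkey : ∀ θ : ℝ, Real.log (1 + 2*r*Real.cos θ + r^2)
      = 2 * (F (circleMap 0 1 θ)).re := by
    intro θ
    have hre' : (1 + (r:ℂ) * circleMap 0 1 θ).re = 1 + r * Real.cos θ := by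
      simp [circleMap]
    have him' : (1 + (r:ℂ) * circleMap 0 1 θ).im = r * Real.sin θ := by
      simp [circleMap]
    have hF' : (F (circleMap 0 1 θ)).re = Real.log ‖1 + (r:ℂ) * circleMap 0 1 θ‖ :=
      Complex.log_re _
    have hsq : ‖1 + (r:ℂ) * circleMap 0 1 θ‖ ^ 2 = 1 + 2*r*Real.cos θ + r^2 := by
      rw [Complex.sq_norm, Complex.normSq_apply, hre', him']
      nlinarith [Real.sin_sq_add_cos_sq θ]
    rw [hF', ← hsq, Real.log_pow]
    push_cast
    ring
  rw [intervalIntegral.integral_congr (fun θ _ => hkey θ), intervalIntegral.integral_const_mul,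
    hre, mul_zero]

lemma Lpos {r : ℝ} (hr : |r| < 1) (x : ℝ) : 0 < 1 + 2*r*Real.cos x + r^2 := by
  have hrc : |r * Real.cos x| ≤ |r| * 1 := by
    rw [abs_mul]; gcongr; exact Real.abs_cos_le_one x
  have h := (abs_le.mp (hrc.trans_eq (mul_one _))).1
  have hpos2 : 0 < 1 - |r| := by linarith
  nlinarith [sq_abs r, mul_pos hpos2 hpos2]

lemma inner_formula {a : ℝ} (ha : 0 < a) :
    ∫ θ in (0:ℝ)..(2*π), Real.log (1 - (1 - a^2) * Real.sin θ ^ 2)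
      = 4 * π * Real.log ((1+a)/2) := by
  set r : ℝ := (1-a)/(1+a) with hrdef
  have ha1 : (0:ℝ) < 1 + a := by linarith
  have hr : |r| < 1 := by
    rw [abs_lt, hrdef]
    constructor
    · rw [lt_div_iff₀ ha1]; linarith
    · rw [div_lt_iff₀ ha1]; linarith
  set L : ℝ → ℝ := fun u => Real.log (1 + 2*r*Real.cos u + r^2) with hL
  have hLcont : Continuous L :=
    Continuous.log (by continuity) (fun x => ne_of_gt (Lpos hr x))
  have hLper : Function.Periodic L (2*π) := by
    intro u; simp [hL, Real.cos_add_two_pi]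
  have hpt : ∀ θ : ℝ, Real.log (1 - (1 - a^2) * Real.sin θ ^ 2)
      = Real.log (((1+a)/2)^2) + L (2*θ) := by
    intro θ
    have hid : 1 - (1 - a^2) * Real.sin θ ^ 2
        = ((1+a)/2)^2 * (1 + 2*r*Real.cos (2*θ) + r^2) := by
      have hc : Real.cos (2*θ) = 1 - 2 * Real.sin θ ^ 2 := by
        rw [Real.cos_two_mul, ← Real.sin_sq_add_cos_sq θ]; ring
      rw [hc, hrdef]
      field_simp
      ring
    rw [hid, Real.log_mul (by positivity) (ne_of_gt (Lpos hr (2*θ)))]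
  rw [intervalIntegral.integral_congr (fun θ _ => hpt θ)]
  have hint1 : IntervalIntegrable (fun _ : ℝ => Real.log (((1+a)/2)^2)) volume 0 (2*π) :=
    intervalIntegrable_const
  have hint2 : IntervalIntegrable (fun θ : ℝ => L (2*θ)) volume 0 (2*π) :=
    (hLcont.comp (continuous_const.mul continuous_id)).intervalIntegrable _ _
  rw [intervalIntegral.integral_add hint1 hint2]
  have hsub : (∫ θ in (0:ℝ)..(2*π), L (2*θ)) = 0 := by
    have h1 : (∫ θ in (0:ℝ)..(2*π), L (2*θ)) = (2:ℝ)⁻¹ • ∫ u in (0:ℝ)..(2*(2*π)), L u := by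
      rw [intervalIntegral.integral_comp_mul_left L two_ne_zero]
      norm_num
    have h2 : (∫ u in (0:ℝ)..(2*(2*π)), L u)
        = (∫ u in (0:ℝ)..(2*π), L u) + ∫ u in (2*π)..(2*(2*π)), L u := by
      rw [intervalIntegral.integral_add_adjacent_intervals] <;>
        exact hLcont.intervalIntegrable _ _
    have h3 : (∫ u in (2*π)..(2*(2*π)), L u) = ∫ u in (0:ℝ)..(2*π), L u := by
      have := hLper.intervalIntegral_add_eq (2*π) 0
      rw [zero_add] at this
      rw [show 2*(2*π) = 2*π + 2*π by ring, this]
    rw [h1, h2, h3, key_complex r hr]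
    norm_num
  rw [hsub, add_zero, intervalIntegral.integral_const]
  rw [Real.log_pow, smul_eq_mul]
  push_cast
  ring

lemma inner_shift {a : ℝ} (ha : 0 < a) (φ : ℝ) :
    ∫ β in (0:ℝ)..(2*π), Real.log (1 - (1 - a^2) * Real.sin (β - φ) ^ 2)
      = 4 * π * Real.log ((1+a)/2) := by
  set h : ℝ → ℝ := fun θ => Real.log (1 - (1 - a^2) * Real.sin θ ^ 2) with hh
  have hper : Function.Periodic h (2*π) := by
    intro u; simp [hh, Real.sin_add_two_pi]
  have h1 : (∫ β in (0:ℝ)..(2*π), h (β - φ)) = ∫ x in (0 - φ)..(2*π - φ), h x :=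
    intervalIntegral.integral_comp_sub_right h φ
  have h2 : (∫ x in (-φ)..(-φ + 2*π), h x) = ∫ x in (0:ℝ)..(0 + 2*π), h x :=
    hper.intervalIntegral_add_eq (-φ) 0
  rw [h1, show (0:ℝ) - φ = -φ by ring, show 2*π - φ = -φ + 2*π by ring, h2, zero_add]
  exact inner_formula ha

/-- If `f : [0,π] → [0,π]` is C¹ with `f(0) = 0`, `f(π) = π`, `f' > 0`, and `f` is not the
identity, then `∫₀^π ∫₀^{2π} log(1 − (1 − f'(φ)²)·sin²(β − φ)) dβ dφ < 0`. -/
theorem stmt_1 (f f' : ℝ → ℝ)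
    (hderiv : ∀ x ∈ Set.Icc (0:ℝ) π, HasDerivWithinAt f (f' x) (Set.Icc 0 π) x)
    (hf'cont : ContinuousOn f' (Set.Icc 0 π))
    (hf0 : f 0 = 0) (hfpi : f π = π)
    (hf'pos : ∀ x ∈ Set.Icc (0:ℝ) π, 0 < f' x)
    (hne : ∃ x ∈ Set.Icc (0:ℝ) π, f x ≠ x) :
    (∫ φ in (0:ℝ)..π, ∫ β in (0:ℝ)..(2 * π),
      Real.log (1 - (1 - f' φ ^ 2) * Real.sin (β - φ) ^ 2)) < 0 := by
  have hpi : (0:ℝ) < π := Real.pi_pos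
  have huIcc : Set.uIcc (0:ℝ) π = Set.Icc 0 π := Set.uIcc_of_le hpi.le
  -- continuity of f on Icc
  have hfcont : ContinuousOn f (Set.Icc 0 π) := fun x hx =>
    (hderiv x hx).continuousWithinAt
  -- FTC on subintervals
  have hFTC : ∀ x ∈ Set.Icc (0:ℝ) π, (∫ t in (0:ℝ)..x, f' t) = f x - f 0 := by
    intro x hx
    obtain ⟨hx0, hxπ⟩ := hx
    apply intervalIntegral.integral_eq_sub_of_hasDeriv_right_of_le hx0
    · exact hfcont.mono (Set.Icc_subset_Icc le_rfl hxπ)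
    · intro t ht
      have htI : t ∈ Set.Ioo (0:ℝ) π := ⟨ht.1, lt_of_lt_of_le ht.2 hxπ⟩
      have hmem : Set.Icc (0:ℝ) π ∈ nhds t := Icc_mem_nhds htI.1 htI.2
      exact ((hderiv t (Set.Ioo_subset_Icc_self htI)).hasDerivAt hmem).hasDerivWithinAt
    · exact (hf'cont.mono (Set.Icc_subset_Icc le_rfl hxπ)).intervalIntegrable_of_Icc hx0
  have hftc : (∫ t in (0:ℝ)..π, f' t) = π := by
    rw [hFTC π ⟨hpi.le, le_rfl⟩, hfpi, hf0, sub_zero]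
  -- a point where f' ≠ 1
  have hexist : ∃ c ∈ Set.Icc (0:ℝ) π, f' c ≠ 1 := by
    by_contra hcon
    push_neg at hcon
    obtain ⟨x, hx, hfx⟩ := hne
    apply hfx
    have : (∫ t in (0:ℝ)..x, f' t) = ∫ t in (0:ℝ)..x, (1:ℝ) := by
      apply intervalIntegral.integral_congr
      intro t ht
      rw [Set.uIcc_of_le hx.1] at ht
      exact hcon t ⟨ht.1, le_trans ht.2 hx.2⟩
    rw [hFTC x hx, hf0, sub_zero] at this
    simpa using this
  obtain ⟨c, hc, hfc⟩ := hexist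
  -- rewrite the inner integral
  have hrw : (∫ φ in (0:ℝ)..π, ∫ β in (0:ℝ)..(2 * π),
      Real.log (1 - (1 - f' φ ^ 2) * Real.sin (β - φ) ^ 2))
      = ∫ φ in (0:ℝ)..π, 4 * π * Real.log ((1 + f' φ)/2) := by
    apply intervalIntegral.integral_congr
    intro φ hφ
    rw [huIcc] at hφ
    exact inner_shift (hf'pos φ hφ) φ
  rw [hrw]
  -- strict comparison with 2π (f' - 1)
  have hzero : (∫ φ in (0:ℝ)..π, 2 * π * (f' φ - 1)) = 0 := by
    rw [intervalIntegral.integral_const_mul, intervalIntegral.integral_sub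
      ((hf'cont.mono (by rw [huIcc])).intervalIntegrable) intervalIntegrable_const]
    rw [hftc, intervalIntegral.integral_const]
    simp
  have hlt : (∫ φ in (0:ℝ)..π, 4 * π * Real.log ((1 + f' φ)/2))
      < ∫ φ in (0:ℝ)..π, 2 * π * (f' φ - 1) := by
    apply intervalIntegral.integral_lt_integral_of_continuousOn_of_le_of_exists_lt hpi
    · apply ContinuousOn.mul continuousOn_const
      apply ContinuousOn.log
      · exact (continuousOn_const.add hf'cont).div_const 2
      · intro x hx
        have := hf'pos x hx
        positivity
    · exact continuousOn_const.mul (hf'cont.sub continuousOn_const)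
    · intro x hx
      have hx' : x ∈ Set.Icc (0:ℝ) π := ⟨hx.1.le, hx.2⟩
      have hax : 0 < (1 + f' x)/2 := by have := hf'pos x hx'; positivity
      have hlog : Real.log ((1 + f' x)/2) ≤ (1 + f' x)/2 - 1 :=
        Real.log_le_sub_one_of_pos hax
      nlinarith [hpi]
    · refine ⟨c, hc, ?_⟩
      have hax : 0 < (1 + f' c)/2 := by have := hf'pos c hc; positivity
      have hne1 : (1 + f' c)/2 ≠ 1 := by
        intro h; apply hfc; field_simp at h; linarith
      have hlog : Real.log ((1 + f' c)/2) < (1 + f' c)/2 - 1 :=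
        Real.log_lt_sub_one_of_pos hax hne1
      nlinarith [hpi]
  rw [hzero] at hlt
  exact hlt
end

section
/- For every real number a > 0 and every real number φ, the integral over one full period satisfies ∫₀^{2π} log[1 − (1 − a²)·sin²(β − φ)] dβ = 4π · log((1 + a)/2). -/
open Real MeasureTheory intervalIntegral Filter

noncomputable def Kint (r : ℝ) : ℝ :=
  ∫ θ in (0:ℝ)..(2*π), Real.log (1 - 2*r*Real.cos θ + r^2)

lemma quad_pos {r : ℝ} (hr : |r| < 1) (θ : ℝ) : 0 < 1 - 2*r*Real.cos θ + r^2 := by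
  have h1 : r * Real.cos θ ≤ |r| := by
    calc r * Real.cos θ ≤ |r * Real.cos θ| := le_abs_self _
    _ = |r| * |Real.cos θ| := abs_mul _ _
    _ ≤ |r| * 1 := by gcongr; exact Real.abs_cos_le_one θ
    _ = |r| := mul_one _
  have h2 : 0 < (1 - |r|)^2 := by nlinarith [abs_nonneg r]
  nlinarith [sq_abs r]

lemma quad_cont {r : ℝ} (hr : |r| < 1) :
    Continuous fun θ : ℝ => Real.log (1 - 2*r*Real.cos θ + r^2) := by
  have hc : Continuous fun θ : ℝ => 1 - 2*r*Real.cos θ + r^2 := by continuity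
  exact hc.log fun θ => (quad_pos hr θ).ne'

lemma quad_intble {r : ℝ} (hr : |r| < 1) (u v : ℝ) :
    IntervalIntegrable (fun θ : ℝ => Real.log (1 - 2*r*Real.cos θ + r^2)) volume u v :=
  (quad_cont hr).intervalIntegrable u v

lemma Kint_bound {r : ℝ} (hr : |r| < 1) {s : ℝ} (hs : |s| ≤ |r|) :
    |Kint s| ≤ (-(Real.log ((1-|r|)^2)) + Real.log 4) * (2*π) := by
  set M := -(Real.log ((1-|r|)^2)) + Real.log 4 with hM
  have habs : ∀ θ : ℝ, |Real.log (1 - 2*s*Real.cos θ + s^2)| ≤ M := by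
    intro θ
    have hs1 : |s| < 1 := lt_of_le_of_lt hs hr
    have hpos := quad_pos hs1 θ
    have hc1 := Real.neg_one_le_cos θ
    have hc2 := Real.cos_le_one θ
    have hsa := abs_nonneg s
    have hra := abs_nonneg r
    have h1 : s * Real.cos θ ≤ |s| := by
      calc s * Real.cos θ ≤ |s * Real.cos θ| := le_abs_self _
      _ = |s| * |Real.cos θ| := abs_mul _ _
      _ ≤ |s| * 1 := by gcongr; exact Real.abs_cos_le_one θ
      _ = |s| := mul_one _
    have h1' : -|s| ≤ s * Real.cos θ := by
      have : -(s * Real.cos θ) ≤ |s| := by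
        calc -(s * Real.cos θ) ≤ |s * Real.cos θ| := neg_le_abs _
        _ = |s| * |Real.cos θ| := abs_mul _ _
        _ ≤ |s| * 1 := by gcongr; exact Real.abs_cos_le_one θ
        _ = |s| := mul_one _
      linarith
    have hlo : (1 - |r|)^2 ≤ 1 - 2*s*Real.cos θ + s^2 := by
      nlinarith [sq_abs s]
    have hhi : 1 - 2*s*Real.cos θ + s^2 ≤ 4 := by
      nlinarith [sq_abs s]
    have hlopos : 0 < (1 - |r|)^2 := by nlinarith
    have hl1 : Real.log ((1-|r|)^2) ≤ Real.log (1 - 2*s*Real.cos θ + s^2) :=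
      Real.log_le_log hlopos hlo
    have hl2 : Real.log (1 - 2*s*Real.cos θ + s^2) ≤ Real.log 4 :=
      Real.log_le_log hpos hhi
    have hlog4 : (0:ℝ) ≤ Real.log 4 := Real.log_nonneg (by norm_num)
    have hlogLo : Real.log ((1-|r|)^2) ≤ 0 :=
      Real.log_nonpos (le_of_lt hlopos) (by nlinarith)
    rw [abs_le]
    constructor <;> [linarith; linarith]
  have := intervalIntegral.norm_integral_le_of_norm_le_const
    (a := (0:ℝ)) (b := 2*π) (C := M)
    (f := fun θ : ℝ => Real.log (1 - 2*s*Real.cos θ + s^2))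
    (fun x _ => by simpa using habs x)
  have hpi : |2*π - 0| = 2*π := by
    rw [sub_zero, abs_of_pos (by positivity)]
  rw [Kint] at *
  calc |∫ θ in (0:ℝ)..(2*π), Real.log (1 - 2*s*Real.cos θ + s^2)| 
      = ‖∫ θ in (0:ℝ)..(2*π), Real.log (1 - 2*s*Real.cos θ + s^2)‖ := (Real.norm_eq_abs _).symm
    _ ≤ M * |2*π - 0| := this
    _ = M * (2*π) := by rw [hpi]

lemma Kint_dup {r : ℝ} (hr : |r| < 1) : Kint (r^2) = 2 * Kint r := by
  have hr2 : |r^2| < 1 := by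
    rw [abs_pow]; calc |r|^2 ≤ |r| * 1 := by nlinarith [abs_nonneg r]
    _ < 1 := by simpa using hr
  have hfact : ∀ u : ℝ, Real.log (1 - 2*(r^2)*Real.cos (2*u) + (r^2)^2)
      = Real.log (1 - 2*r*Real.cos u + r^2) + Real.log (1 - 2*(-r)*Real.cos u + (-r)^2) := by
    intro u
    have h1 := quad_pos hr u
    have h2 : |(-r)| < 1 := by rwa [abs_neg]
    have h2' := quad_pos h2 u
    rw [← Real.log_mul h1.ne' h2'.ne']
    congr 1
    rw [Real.cos_two_mul]; ring
  have hsub : (∫ u in (0:ℝ)..π, Real.log (1 - 2*(r^2)*Real.cos (2*u) + (r^2)^2))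
      = (2:ℝ)⁻¹ • Kint (r^2) := by
    rw [intervalIntegral.integral_comp_mul_left
      (f := fun θ => Real.log (1 - 2*(r^2)*Real.cos θ + (r^2)^2)) (two_ne_zero)]
    norm_num [Kint]
  have hsplit : (∫ u in (0:ℝ)..π, Real.log (1 - 2*(r^2)*Real.cos (2*u) + (r^2)^2))
      = (∫ u in (0:ℝ)..π, Real.log (1 - 2*r*Real.cos u + r^2))
        + ∫ u in (0:ℝ)..π, Real.log (1 - 2*(-r)*Real.cos u + (-r)^2) := by
    rw [← intervalIntegral.integral_add (quad_intble hr 0 π)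
      (quad_intble (by rwa [abs_neg]) 0 π)]
    exact intervalIntegral.integral_congr fun u _ => hfact u
  have hshift : (∫ u in (0:ℝ)..π, Real.log (1 - 2*(-r)*Real.cos u + (-r)^2))
      = ∫ u in π..(2*π), Real.log (1 - 2*r*Real.cos u + r^2) := by
    have : ∀ u : ℝ, Real.log (1 - 2*(-r)*Real.cos u + (-r)^2)
        = Real.log (1 - 2*r*Real.cos (u + π) + r^2) := by
      intro u; rw [Real.cos_add_pi]; ring_nf
    rw [intervalIntegral.integral_congr (fun u _ => this u)]
    rw [intervalIntegral.integral_comp_add_right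
      (f := fun θ => Real.log (1 - 2*r*Real.cos θ + r^2))]
    norm_num [two_mul]
  have hglue : (∫ u in (0:ℝ)..π, Real.log (1 - 2*r*Real.cos u + r^2))
      + (∫ u in π..(2*π), Real.log (1 - 2*r*Real.cos u + r^2)) = Kint r :=
    intervalIntegral.integral_add_adjacent_intervals (quad_intble hr 0 π) (quad_intble hr π (2*π))
  have : (2:ℝ)⁻¹ • Kint (r^2) = Kint r := by
    rw [← hsub, hsplit, hshift, hglue]
  rw [smul_eq_mul] at this
  linarith

lemma Kint_zero {r : ℝ} (hr : |r| < 1) : Kint r = 0 := by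
  have key : ∀ n : ℕ, Kint (r^(2^n)) = 2^n * Kint r := by
    intro n
    induction n with
    | zero => simp
    | succ n ih =>
      have habs : |r^(2^n)| < 1 := by
        rw [abs_pow]
        exact pow_lt_one₀ (abs_nonneg r) hr (by positivity)
      have h1 : r^(2^(n+1)) = (r^(2^n))^2 := by
        rw [← pow_mul, ← pow_succ]
      rw [h1, Kint_dup habs, ih]; ring
  set M := (-(Real.log ((1-|r|)^2)) + Real.log 4) * (2*π) with hM
  have hb : ∀ n : ℕ, |Kint r| ≤ M / 2^n := by
    intro n
    have habs : |r^(2^n)| ≤ |r| := by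
      rw [abs_pow]
      calc |r|^(2^n) ≤ |r|^1 :=
        pow_le_pow_of_le_one (abs_nonneg r) hr.le (Nat.one_le_two_pow)
      _ = |r| := pow_one _
    have := Kint_bound hr habs
    rw [key n, abs_mul] at this
    have h2 : |(2:ℝ)^n| = 2^n := abs_of_pos (by positivity)
    rw [h2] at this
    rw [le_div_iff₀ (by positivity)]
    linarith [mul_comm ((2:ℝ)^n) |Kint r|]
  have htend : Tendsto (fun n : ℕ => M / 2^n) atTop (nhds 0) := by
    have h0 : Tendsto (fun n : ℕ => ((1:ℝ)/2)^n) atTop (nhds 0) :=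
      tendsto_pow_atTop_nhds_zero_of_lt_one (by norm_num) (by norm_num)
    have := h0.const_mul M
    simpa [div_eq_mul_inv, mul_comm, mul_pow, one_div, inv_pow] using this
  have : |Kint r| ≤ 0 := ge_of_tendsto htend (Eventually.of_forall hb)
  have := le_antisymm this (abs_nonneg _)
  exact abs_eq_zero.mp this

/-- For every real `a > 0` and every real `φ`,
`∫₀^{2π} log(1 − (1 − a²)·sin²(β − φ)) dβ = 4π · log((1 + a)/2)`. -/
theorem stmt_2 (a : ℝ) (ha : 0 < a) (φ : ℝ) :
    ∫ β in (0:ℝ)..(2 * π), Real.log (1 - (1 - a ^ 2) * Real.sin (β - φ) ^ 2)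
      = 4 * π * Real.log ((1 + a) / 2) := by
  set p : ℝ := (1 + a) / 2 with hp
  set r : ℝ := (1 - a) / (1 + a) with hrdef
  have hp0 : 0 < p := by rw [hp]; linarith
  have ha1 : (0:ℝ) < 1 + a := by linarith
  have hr : |r| < 1 := by
    rw [hrdef, abs_div, abs_of_pos ha1, div_lt_one ha1]
    rw [abs_lt]; constructor <;> linarith
  have hrn : |(-r)| < 1 := by rwa [abs_neg]
  -- key identity
  have hkey : ∀ β : ℝ, 1 - (1 - a ^ 2) * Real.sin β ^ 2
      = p^2 * (1 - 2*(-r)*Real.cos (2*β) + (-r)^2) := by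
    intro β
    have hs : Real.sin β ^ 2 = 1 - Real.cos β ^ 2 := Real.sin_sq β
    rw [hs, Real.cos_two_mul, hp, hrdef]
    field_simp
    ring
  have hlog : ∀ β : ℝ, Real.log (1 - (1 - a ^ 2) * Real.sin β ^ 2)
      = 2 * Real.log p + Real.log (1 - 2*(-r)*Real.cos (2*β) + (-r)^2) := by
    intro β
    rw [hkey β, Real.log_mul (by positivity) (quad_pos hrn (2*β)).ne',
      Real.log_pow]
    push_cast; ring
  -- remove the phase shift φ
  have hper : Function.Periodic
      (fun β : ℝ => Real.log (1 - (1 - a ^ 2) * Real.sin β ^ 2)) (2*π) := by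
    intro β; simp [Real.sin_add_two_pi]
  have hshift : (∫ β in (0:ℝ)..(2*π), Real.log (1 - (1 - a ^ 2) * Real.sin (β - φ) ^ 2))
      = ∫ β in (0:ℝ)..(2*π), Real.log (1 - (1 - a ^ 2) * Real.sin β ^ 2) := by
    rw [intervalIntegral.integral_comp_sub_right
      (f := fun β => Real.log (1 - (1 - a ^ 2) * Real.sin β ^ 2)) φ]
    have := hper.intervalIntegral_add_eq (0 - φ) 0
    rw [zero_add] at this
    rw [show (2*π - φ) = 0 - φ + 2*π by ring, this]
  rw [hshift]
  rw [intervalIntegral.integral_congr (fun β _ => hlog β)]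
  -- integrability of the oscillating part
  have hcont : Continuous fun β : ℝ => Real.log (1 - 2*(-r)*Real.cos (2*β) + (-r)^2) :=
    (quad_cont hrn).comp (continuous_const.mul continuous_id)
  rw [intervalIntegral.integral_add (intervalIntegrable_const)
    (hcont.intervalIntegrable 0 (2*π))]
  have hosc : (∫ β in (0:ℝ)..(2*π), Real.log (1 - 2*(-r)*Real.cos (2*β) + (-r)^2)) = 0 := by
    have hsub : (∫ β in (0:ℝ)..(2*π), Real.log (1 - 2*(-r)*Real.cos (2*β) + (-r)^2))
        = (2:ℝ)⁻¹ • ∫ θ in (0:ℝ)..(4*π), Real.log (1 - 2*(-r)*Real.cos θ + (-r)^2) := by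
      rw [intervalIntegral.integral_comp_mul_left
        (f := fun θ => Real.log (1 - 2*(-r)*Real.cos θ + (-r)^2)) (two_ne_zero)]
      norm_num
      ring_nf
    have hperK : Function.Periodic
        (fun θ : ℝ => Real.log (1 - 2*(-r)*Real.cos θ + (-r)^2)) (2*π) := by
      intro θ; simp [Real.cos_add_two_pi]
    have h2 : (∫ θ in (2*π)..(4*π), Real.log (1 - 2*(-r)*Real.cos θ + (-r)^2))
        = Kint (-r) := by
      have := hperK.intervalIntegral_add_eq (2*π) 0
      rw [zero_add] at this
      rw [show (4*π) = 2*π + 2*π by ring, this, Kint]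
    have h3 : (∫ θ in (0:ℝ)..(4*π), Real.log (1 - 2*(-r)*Real.cos θ + (-r)^2))
        = Kint (-r) + Kint (-r) := by
      rw [← intervalIntegral.integral_add_adjacent_intervals
        (quad_intble hrn 0 (2*π)) (quad_intble hrn (2*π) (4*π)), h2, Kint]
    rw [hsub, h3, Kint_zero hrn]
    norm_num
  rw [hosc, add_zero, intervalIntegral.integral_const]
  rw [smul_eq_mul]
  ring
end

section
/- Let w : [0,π] → ℝ be continuously differentiable with w(0) = w(π) = 0, |w'(s)| < 1 for all s ∈ [0,π], and w not identically zero. For t ∈ [0,1] define F(t) = ∫₀^π log( sin(s + t·w(s)) / sin(s − t·w(s)) ) · w'(s) ds. Then F(0) = 0 and F is strictly increasing on [0,1]; in particular F(t) > 0 for every t ∈ (0,1]. -/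
open Real MeasureTheory

section Aux

lemma jordan_min {u : ℝ} (hu : u ∈ Set.Icc 0 π) : 2 / π * min u (π - u) ≤ Real.sin u := by
  rcases le_total u (π / 2) with h | h
  · calc 2 / π * min u (π - u) ≤ 2 / π * u := by
          apply mul_le_mul_of_nonneg_left (min_le_left _ _)
          positivity
    _ ≤ Real.sin u := Real.mul_le_sin hu.1 h
  · have h1 : π - u ≤ π / 2 := by linarith
    have h2 : 0 ≤ π - u := by linarith [hu.2]
    calc 2 / π * min u (π - u) ≤ 2 / π * (π - u) := by
          apply mul_le_mul_of_nonneg_left (min_le_right _ _)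
          positivity
    _ ≤ Real.sin (π - u) := Real.mul_le_sin h2 h1
    _ = Real.sin u := Real.sin_pi_sub u

lemma neg_log_le {x : ℝ} (hx : 0 < x) : -Real.log x ≤ 2 * x ^ (-(1:ℝ)/2) := by
  have h1 : Real.log (x ^ (-(1:ℝ)/2)) ≤ x ^ (-(1:ℝ)/2) - 1 :=
    Real.log_le_sub_one_of_pos (Real.rpow_pos_of_pos hx _)
  rw [Real.log_rpow hx] at h1
  nlinarith [Real.rpow_nonneg hx.le (-(1:ℝ)/2)]

lemma logsin_concave {x y a b : ℝ} (hx : x ∈ Set.Ioo 0 π) (hy : y ∈ Set.Ioo 0 π)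
    (ha : 0 ≤ a) (hb : 0 ≤ b) (hab : a + b = 1) :
    a * Real.log (Real.sin x) + b * Real.log (Real.sin y) ≤ Real.log (Real.sin (a * x + b * y)) := by
  have hsx : 0 < Real.sin x := Real.sin_pos_of_pos_of_lt_pi hx.1 hx.2
  have hsy : 0 < Real.sin y := Real.sin_pos_of_pos_of_lt_pi hy.1 hy.2
  have hsin : a * Real.sin x + b * Real.sin y ≤ Real.sin (a * x + b * y) := by
    have := strictConcaveOn_sin_Icc.concaveOn.2 (Set.mem_Icc.2 ⟨hx.1.le, hx.2.le⟩)
      (Set.mem_Icc.2 ⟨hy.1.le, hy.2.le⟩) ha hb hab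
    simpa [smul_eq_mul] using this
  have hpos : 0 < a * Real.sin x + b * Real.sin y := by
    rcases eq_or_lt_of_le ha with h | h
    · rw [← h] at hab ⊢; simp at hab; nlinarith
    · nlinarith
  calc a * Real.log (Real.sin x) + b * Real.log (Real.sin y)
      ≤ Real.log (a * Real.sin x + b * Real.sin y) := by
        have := strictConcaveOn_log_Ioi.concaveOn.2 (Set.mem_Ioi.2 hsx) (Set.mem_Ioi.2 hsy) ha hb hab
        simpa [smul_eq_mul] using this
    _ ≤ Real.log (Real.sin (a * x + b * y)) := Real.log_le_log hpos hsin

lemma logsin_strict_concave {x y a b : ℝ} (hx : x ∈ Set.Ioo 0 π) (hy : y ∈ Set.Ioo 0 π)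
    (hxy : x ≠ y) (ha : 0 < a) (hb : 0 < b) (hab : a + b = 1) :
    a * Real.log (Real.sin x) + b * Real.log (Real.sin y) < Real.log (Real.sin (a * x + b * y)) := by
  have hsx : 0 < Real.sin x := Real.sin_pos_of_pos_of_lt_pi hx.1 hx.2
  have hsy : 0 < Real.sin y := Real.sin_pos_of_pos_of_lt_pi hy.1 hy.2
  have hsin : a * Real.sin x + b * Real.sin y < Real.sin (a * x + b * y) := by
    have := strictConcaveOn_sin_Icc.2 (Set.mem_Icc.2 ⟨hx.1.le, hx.2.le⟩)
      (Set.mem_Icc.2 ⟨hy.1.le, hy.2.le⟩) hxy ha hb hab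
    simpa [smul_eq_mul] using this
  have hpos : 0 < a * Real.sin x + b * Real.sin y := by nlinarith
  calc a * Real.log (Real.sin x) + b * Real.log (Real.sin y)
      ≤ Real.log (a * Real.sin x + b * Real.sin y) := by
        have := strictConcaveOn_log_Ioi.concaveOn.2 (Set.mem_Ioi.2 hsx) (Set.mem_Ioi.2 hsy)
          ha.le hb.le hab
        simpa [smul_eq_mul] using this
    _ < Real.log (Real.sin (a * x + b * y)) := Real.log_lt_log hpos hsin

lemma integrable_of_rpow_bound (f : ℝ → ℝ) (K : ℝ)
    (hc : ContinuousOn f (Set.Ioo 0 π))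
    (hb : ∀ s ∈ Set.Ioo 0 π, |f s| ≤ K * (s ^ (-(1:ℝ)/2) + (π - s) ^ (-(1:ℝ)/2))) :
    IntervalIntegrable f volume 0 π := by
  have hr : (-1:ℝ) < -(1:ℝ)/2 := by norm_num
  have h1 : IntervalIntegrable (fun s : ℝ => s ^ (-(1:ℝ)/2)) volume 0 π :=
    intervalIntegral.intervalIntegrable_rpow' hr
  have h2 : IntervalIntegrable (fun s : ℝ => (π - s) ^ (-(1:ℝ)/2)) volume 0 π := by
    have this := ((intervalIntegral.intervalIntegrable_rpow' (a := 0) (b := π) hr).comp_sub_left π)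
    simpa using this.symm
  have hg : IntervalIntegrable (fun s : ℝ => K * (s ^ (-(1:ℝ)/2) + (π - s) ^ (-(1:ℝ)/2)))
      volume 0 π := ((h1.add h2).const_mul K)
  rw [intervalIntegrable_iff'] at hg ⊢
  rw [Set.uIcc_of_le pi_pos.le] at hg ⊢
  have hIoo : IntegrableOn f (Set.Ioo 0 π) volume := by
    apply Integrable.mono' (hg.mono_set Set.Ioo_subset_Icc_self)
      (hc.aestronglyMeasurable measurableSet_Ioo)
    exact (ae_restrict_iff' measurableSet_Ioo).2 (Filter.Eventually.of_forall hb)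
  exact hIoo.congr_set_ae Ioo_ae_eq_Icc.symm

lemma integral_pos_of_subinterval {g : ℝ → ℝ} {α β : ℝ}
    (hint : IntervalIntegrable g volume 0 π)
    (hnn : ∀ s ∈ Set.Icc (0:ℝ) π, 0 ≤ g s)
    (hα : 0 < α) (hαβ : α < β) (hβ : β < π)
    (hpos : ∀ s ∈ Set.Ioo α β, 0 < g s) :
    0 < ∫ s in (0:ℝ)..π, g s := by
  have sub1 : Set.uIcc (0:ℝ) α ⊆ Set.uIcc (0:ℝ) π :=
    Set.uIcc_subset_uIcc Set.left_mem_uIcc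
      (by simp [Set.mem_uIcc]; left; constructor <;> linarith)
  have sub2 : Set.uIcc α β ⊆ Set.uIcc (0:ℝ) π :=
    Set.uIcc_subset_uIcc (by simp [Set.mem_uIcc]; left; constructor <;> linarith)
      (by simp [Set.mem_uIcc]; left; constructor <;> linarith)
  have sub3 : Set.uIcc β π ⊆ Set.uIcc (0:ℝ) π :=
    Set.uIcc_subset_uIcc (by simp [Set.mem_uIcc]; left; constructor <;> linarith)
      Set.right_mem_uIcc
  have i1 := hint.mono_set sub1
  have i2 := hint.mono_set sub2
  have i3 := hint.mono_set sub3
  have e1 : (∫ s in (0:ℝ)..α, g s) + (∫ s in α..β, g s) = ∫ s in (0:ℝ)..β, g s :=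
    intervalIntegral.integral_add_adjacent_intervals i1 i2
  have e2 : (∫ s in (0:ℝ)..β, g s) + (∫ s in β..π, g s) = ∫ s in (0:ℝ)..π, g s :=
    intervalIntegral.integral_add_adjacent_intervals (i1.trans i2) i3
  have n1 : 0 ≤ ∫ s in (0:ℝ)..α, g s := by
    apply intervalIntegral.integral_nonneg (by linarith)
    intro u hu; exact hnn u ⟨hu.1, by linarith [hu.2]⟩
  have n3 : 0 ≤ ∫ s in β..π, g s := by
    apply intervalIntegral.integral_nonneg (by linarith)
    intro u hu; exact hnn u ⟨by linarith [hu.1], hu.2⟩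
  have p2 : 0 < ∫ s in α..β, g s :=
    intervalIntegral.intervalIntegral_pos_of_pos_on i2 hpos hαβ
  linarith

end Aux

set_option maxHeartbeats 2000000 in
/-- If `w : [0,π] → ℝ` is C¹ with `w(0) = w(π) = 0`, `|w'| < 1`, and `w` not identically
zero, and `F(t) = ∫₀^π log( sin(s + t·w(s)) / sin(s − t·w(s)) )·w'(s) ds`, then `F(0) = 0`,
`F` is strictly increasing on `[0,1]`, and `F(t) > 0` for `t ∈ (0,1]`. -/
theorem stmt_6 (w w' : ℝ → ℝ)
    (hderiv : ∀ s ∈ Set.Icc (0:ℝ) π, HasDerivWithinAt w (w' s) (Set.Icc 0 π) s)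
    (hw'cont : ContinuousOn w' (Set.Icc 0 π))
    (hw0 : w 0 = 0) (hwpi : w π = 0)
    (hw'lt : ∀ s ∈ Set.Icc (0:ℝ) π, |w' s| < 1)
    (hne : ∃ s ∈ Set.Icc (0:ℝ) π, w s ≠ 0)
    (F : ℝ → ℝ)
    (hF : ∀ t, F t = ∫ s in (0:ℝ)..π,
      Real.log (Real.sin (s + t * w s) / Real.sin (s - t * w s)) * w' s) :
    F 0 = 0 ∧ StrictMonoOn F (Set.Icc 0 1) ∧ ∀ t ∈ Set.Ioc (0:ℝ) 1, 0 < F t := by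
  have hπ : 0 < π := pi_pos
  have hwc : ContinuousOn w (Set.Icc 0 π) := fun s hs => (hderiv s hs).continuousWithinAt
  -- maximum of |w'|
  obtain ⟨s₁, hs₁, hmax⟩ := isCompact_Icc.exists_isMaxOn (Set.nonempty_Icc.2 hπ.le)
    (continuous_abs.comp_continuousOn hw'cont)
  set θ : ℝ := |w' s₁| with hθdef
  have hθ0 : 0 ≤ θ := abs_nonneg _
  have hθ1 : θ < 1 := hw'lt s₁ hs₁
  have hθ : ∀ s ∈ Set.Icc (0:ℝ) π, |w' s| ≤ θ := fun s hs => hmax hs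
  -- bound on w via MVT
  have hwb : ∀ s ∈ Set.Icc (0:ℝ) π, |w s| ≤ θ * min s (π - s) := by
    intro s hs
    have mvt0 := (convex_Icc (0:ℝ) π).norm_image_sub_le_of_norm_hasDerivWithin_le hderiv
      (fun x hx => by simpa [Real.norm_eq_abs] using hθ x hx)
      (Set.left_mem_Icc.2 hπ.le) hs
    have mvtπ := (convex_Icc (0:ℝ) π).norm_image_sub_le_of_norm_hasDerivWithin_le hderiv
      (fun x hx => by simpa [Real.norm_eq_abs] using hθ x hx)
      (Set.right_mem_Icc.2 hπ.le) hs
    rw [Real.norm_eq_abs, Real.norm_eq_abs, hw0] at mvt0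
    rw [Real.norm_eq_abs, Real.norm_eq_abs, hwpi] at mvtπ
    rw [sub_zero, sub_zero, abs_of_nonneg hs.1] at mvt0
    rw [sub_zero, abs_sub_comm, abs_of_nonneg (by linarith [hs.2] : (0:ℝ) ≤ π - s)] at mvtπ
    rcases le_total s (π - s) with h | h
    · rwa [min_eq_left h]
    · rwa [min_eq_right h]
  set c : ℝ := 2 / π * (1 - θ) with hcdef
  have hc : 0 < c := by
    have : 0 < 1 - θ := by linarith
    positivity
  -- key positivity/lower bound
  have key : ∀ t : ℝ, |t| ≤ 1 → ∀ s ∈ Set.Ioo (0:ℝ) π,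
      (s + t * w s ∈ Set.Ioo (0:ℝ) π) ∧ c * min s (π - s) ≤ Real.sin (s + t * w s) := by
    intro t ht s hs
    set m := min s (π - s) with hmdef
    have hm0 : 0 < m := lt_min hs.1 (by linarith [hs.2])
    have hm1 : m ≤ s := min_le_left _ _
    have hm2 : m ≤ π - s := min_le_right _ _
    have hws : |w s| ≤ θ * m := hwb s (Set.Ioo_subset_Icc_self hs)
    have htw : |t * w s| ≤ θ * m := by
      rw [abs_mul]
      calc |t| * |w s| ≤ 1 * (θ * m) :=
            mul_le_mul ht hws (abs_nonneg _) zero_le_one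
        _ = θ * m := one_mul _
    obtain ⟨htw1, htw2⟩ := abs_le.mp htw
    have h1 : (1 - θ) * m ≤ s + t * w s := by nlinarith
    have h2 : s + t * w s ≤ π - (1 - θ) * m := by nlinarith
    have hpos : 0 < (1 - θ) * m := by nlinarith
    have hmem : s + t * w s ∈ Set.Ioo (0:ℝ) π := ⟨by linarith, by linarith⟩
    refine ⟨hmem, ?_⟩
    have hj := jordan_min (u := s + t * w s) (Set.Ioo_subset_Icc_self hmem)
    have hminu : (1 - θ) * m ≤ min (s + t * w s) (π - (s + t * w s)) :=
      le_min (by linarith) (by linarith)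
    calc c * m = 2 / π * ((1 - θ) * m) := by rw [hcdef]; ring
      _ ≤ 2 / π * min (s + t * w s) (π - (s + t * w s)) := by
          apply mul_le_mul_of_nonneg_left hminu; positivity
      _ ≤ Real.sin (s + t * w s) := hj
  have hmap : ∀ t : ℝ, |t| ≤ 1 → ∀ s ∈ Set.Icc (0:ℝ) π, s + t * w s ∈ Set.Icc (0:ℝ) π := by
    intro t ht s hs
    rcases eq_or_lt_of_le hs.1 with h0 | h0
    · rw [← h0]; simp [hw0]; exact hπ.le
    rcases eq_or_lt_of_le hs.2 with hp | hp
    · rw [hp]; simp [hwpi]; exact hπ.le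
    · exact Set.Ioo_subset_Icc_self ((key t ht s ⟨h0, hp⟩).1)
  -- integrability of products
  have hIntMul : ∀ t : ℝ, |t| ≤ 1 → ∀ ρ : ℝ → ℝ, ContinuousOn ρ (Set.Icc 0 π) → ∀ R : ℝ,
      (∀ s ∈ Set.Icc (0:ℝ) π, |ρ s| ≤ R) →
      IntervalIntegrable (fun s => Real.log (Real.sin (s + t * w s)) * ρ s) volume 0 π := by
    intro t ht ρ hρc R hρR
    have hR0 : 0 ≤ R := le_trans (abs_nonneg _) (hρR 0 ⟨le_rfl, hπ.le⟩)
    have hinner : ContinuousOn (fun s : ℝ => s + t * w s) (Set.Ioo 0 π) :=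
      continuousOn_id.add (continuousOn_const.mul (hwc.mono Set.Ioo_subset_Icc_self))
    have hsinc : ContinuousOn (fun s : ℝ => Real.sin (s + t * w s)) (Set.Ioo 0 π) :=
      Real.continuous_sin.comp_continuousOn hinner
    have hsinpos : ∀ s ∈ Set.Ioo (0:ℝ) π, 0 < Real.sin (s + t * w s) := by
      intro s hs
      have hk := key t ht s hs
      have hm0 : 0 < min s (π - s) := lt_min hs.1 (by linarith [hs.2])
      calc (0:ℝ) < c * min s (π - s) := by positivity
        _ ≤ _ := hk.2
    have hlogc : ContinuousOn (fun s : ℝ => Real.log (Real.sin (s + t * w s))) (Set.Ioo 0 π) :=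
      hsinc.log (fun s hs => (hsinpos s hs).ne')
    apply integrable_of_rpow_bound _ (2 * c ^ (-(1:ℝ)/2) * R)
      (hlogc.mul (hρc.mono Set.Ioo_subset_Icc_self))
    intro s hs
    set m := min s (π - s) with hmdef
    have hm0 : 0 < m := lt_min hs.1 (by linarith [hs.2])
    have hk := key t ht s hs
    have hsp : 0 < Real.sin (s + t * w s) := hsinpos s hs
    have hlog1 : Real.log (c * m) ≤ Real.log (Real.sin (s + t * w s)) :=
      Real.log_le_log (by positivity) hk.2
    have hlog2 : -Real.log (c * m) ≤ 2 * (c * m) ^ (-(1:ℝ)/2) := neg_log_le (by positivity)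
    have hrw : (c * m) ^ (-(1:ℝ)/2) = c ^ (-(1:ℝ)/2) * m ^ (-(1:ℝ)/2) :=
      Real.mul_rpow hc.le hm0.le
    have hmr : m ^ (-(1:ℝ)/2) ≤ s ^ (-(1:ℝ)/2) + (π - s) ^ (-(1:ℝ)/2) := by
      rcases le_total s (π - s) with h | h
      · rw [hmdef, min_eq_left h]
        have : (0:ℝ) ≤ (π - s) ^ (-(1:ℝ)/2) := Real.rpow_nonneg (by linarith [hs.1]) _
        linarith
      · rw [hmdef, min_eq_right h]
        have : (0:ℝ) ≤ s ^ (-(1:ℝ)/2) := Real.rpow_nonneg hs.1.le _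
        linarith
    have hlognp : Real.log (Real.sin (s + t * w s)) ≤ 0 :=
      Real.log_nonpos hsp.le (Real.sin_le_one _)
    have habslog : |Real.log (Real.sin (s + t * w s))| = -Real.log (Real.sin (s + t * w s)) :=
      abs_of_nonpos hlognp
    have hbnd : |Real.log (Real.sin (s + t * w s))|
        ≤ 2 * c ^ (-(1:ℝ)/2) * (s ^ (-(1:ℝ)/2) + (π - s) ^ (-(1:ℝ)/2)) := by
      rw [habslog]
      have hc2 : (0:ℝ) ≤ c ^ (-(1:ℝ)/2) := Real.rpow_nonneg hc.le _
      calc -Real.log (Real.sin (s + t * w s)) ≤ -Real.log (c * m) := by linarith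
        _ ≤ 2 * (c * m) ^ (-(1:ℝ)/2) := hlog2
        _ = 2 * c ^ (-(1:ℝ)/2) * m ^ (-(1:ℝ)/2) := by rw [hrw]; ring
        _ ≤ 2 * c ^ (-(1:ℝ)/2) * (s ^ (-(1:ℝ)/2) + (π - s) ^ (-(1:ℝ)/2)) := by
            apply mul_le_mul_of_nonneg_left hmr; positivity
    calc |Real.log (Real.sin (s + t * w s)) * ρ s|
        = |Real.log (Real.sin (s + t * w s))| * |ρ s| := abs_mul _ _
      _ ≤ (2 * c ^ (-(1:ℝ)/2) * (s ^ (-(1:ℝ)/2) + (π - s) ^ (-(1:ℝ)/2))) * R :=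
          mul_le_mul hbnd (hρR s (Set.Ioo_subset_Icc_self hs)) (abs_nonneg _)
            (by
              have h1 : (0:ℝ) ≤ s ^ (-(1:ℝ)/2) := Real.rpow_nonneg hs.1.le _
              have h2 : (0:ℝ) ≤ (π - s) ^ (-(1:ℝ)/2) :=
                Real.rpow_nonneg (by linarith [hs.2]) _
              have h3 : (0:ℝ) ≤ c ^ (-(1:ℝ)/2) := Real.rpow_nonneg hc.le _
              nlinarith)
      _ = 2 * c ^ (-(1:ℝ)/2) * R * (s ^ (-(1:ℝ)/2) + (π - s) ^ (-(1:ℝ)/2)) := by ring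
  have hInt : ∀ t : ℝ, |t| ≤ 1 →
      IntervalIntegrable (fun s => Real.log (Real.sin (s + t * w s))) volume 0 π := by
    intro t ht
    have := hIntMul t ht (fun _ => 1) continuousOn_const 1 (by intro s _; simp)
    simpa using this
  have hIntw' : ∀ t : ℝ, |t| ≤ 1 →
      IntervalIntegrable (fun s => Real.log (Real.sin (s + t * w s)) * w' s) volume 0 π :=
    fun t ht => hIntMul t ht w' hw'cont 1 (fun s hs => (hw'lt s hs).le)
  -- the constants
  set C : ℝ := ∫ s in (0:ℝ)..π, Real.log (Real.sin s) with hCdef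
  set P : ℝ → ℝ := fun t => ∫ s in (0:ℝ)..π, Real.log (Real.sin (s + t * w s)) with hPdef
  set A : ℝ → ℝ := fun t => ∫ s in (0:ℝ)..π, Real.log (Real.sin (s + t * w s)) * w' s with hAdef
  -- FTC identity
  have hIls : IntervalIntegrable (fun u : ℝ => Real.log (Real.sin u)) volume 0 π := by
    have h := hInt 0 (by norm_num)
    have he : (fun s : ℝ => Real.log (Real.sin (s + 0 * w s)))
        = fun u : ℝ => Real.log (Real.sin u) := by funext u; norm_num
    rwa [he] at h
  have hFTC : ∀ t : ℝ, |t| ≤ 1 → P t + t * A t = C := by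
    intro t ht
    set L : ℝ → ℝ := fun x => ∫ u in (0:ℝ)..x, Real.log (Real.sin u) with hLdef
    have hIcc : IntegrableOn (fun u : ℝ => Real.log (Real.sin u)) (Set.uIcc 0 π) volume :=
      (intervalIntegrable_iff').mp hIls
    have hLc : ContinuousOn L (Set.uIcc 0 π) :=
      intervalIntegral.continuousOn_primitive_interval hIcc
    have hmapt := hmap t ht
    have hinnerc : ContinuousOn (fun s : ℝ => s + t * w s) (Set.Icc 0 π) :=
      continuousOn_id.add (continuousOn_const.mul hwc)
    have hgc : ContinuousOn (fun s : ℝ => L (s + t * w s)) (Set.Icc 0 π) := by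
      apply hLc.comp hinnerc
      intro s hs
      rw [Set.uIcc_of_le hπ.le]
      exact hmapt s hs
    have hgd : ∀ s ∈ Set.Ioo (0:ℝ) π, HasDerivAt (fun s : ℝ => L (s + t * w s))
        (Real.log (Real.sin (s + t * w s)) * (1 + t * w' s)) s := by
      intro s hs
      have hw : HasDerivAt w (w' s) s :=
        (hderiv s (Set.Ioo_subset_Icc_self hs)).hasDerivAt (Icc_mem_nhds hs.1 hs.2)
      have hinner : HasDerivAt (fun s : ℝ => s + t * w s) (1 + t * w' s) s :=
        (hasDerivAt_id s).add (hw.const_mul t)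
      have hx := (key t ht s hs).1
      have hsx : Real.sin (s + t * w s) ≠ 0 :=
        (Real.sin_pos_of_pos_of_lt_pi hx.1 hx.2).ne'
      have hsub : Set.uIcc (0:ℝ) (s + t * w s) ⊆ Set.uIcc (0:ℝ) π := by
        apply Set.uIcc_subset_uIcc Set.left_mem_uIcc
        rw [Set.uIcc_of_le hπ.le]
        exact Set.Ioo_subset_Icc_self hx
      have hout : HasDerivAt L (Real.log (Real.sin (s + t * w s))) (s + t * w s) := by
        apply intervalIntegral.integral_hasDerivAt_right (hIls.mono_set hsub)
        · exact ((Real.measurable_log.comp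
            Real.measurable_sin).aestronglyMeasurable).stronglyMeasurableAtFilter
        · exact (Real.continuousAt_log hsx).comp Real.continuous_sin.continuousAt
      exact hout.comp s hinner
    have hIf : IntervalIntegrable
        (fun s => Real.log (Real.sin (s + t * w s)) * (1 + t * w' s)) volume 0 π := by
      apply hIntMul t ht _ (continuousOn_const.add (continuousOn_const.mul hw'cont)) 2
      intro s hs
      calc |1 + t * w' s| ≤ |(1:ℝ)| + |t * w' s| := abs_add_le _ _
        _ ≤ 1 + 1 * 1 := by
            rw [abs_one, abs_mul]
            have := (hw'lt s hs).le
            have := abs_nonneg (w' s)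
            nlinarith [abs_nonneg t, ht]
        _ = 2 := by norm_num
    have hFTC0 : ∫ s in (0:ℝ)..π, Real.log (Real.sin (s + t * w s)) * (1 + t * w' s)
        = L (π + t * w π) - L (0 + t * w 0) :=
      intervalIntegral.integral_eq_sub_of_hasDeriv_right_of_le hπ.le hgc
        (fun s hs => (hgd s hs).hasDerivWithinAt) hIf
    rw [hwpi, hw0] at hFTC0
    simp only [mul_zero, add_zero, zero_add] at hFTC0
    have hL0 : L 0 = 0 := intervalIntegral.integral_same
    have hsplit : ∫ s in (0:ℝ)..π, Real.log (Real.sin (s + t * w s)) * (1 + t * w' s)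
        = P t + t * A t := by
      have he : (fun s => Real.log (Real.sin (s + t * w s)) * (1 + t * w' s))
          = fun s => Real.log (Real.sin (s + t * w s))
            + t * (Real.log (Real.sin (s + t * w s)) * w' s) := by
        funext s; ring
      rw [he, intervalIntegral.integral_add (hInt t ht) ((hIntw' t ht).const_mul t),
        intervalIntegral.integral_const_mul]
    rw [hsplit, hL0] at hFTC0
    rw [hFTC0, sub_zero]
  -- F in terms of A
  have hFA : ∀ t : ℝ, |t| ≤ 1 → F t = A t - A (-t) := by
    intro t ht
    have ht' : |(-t)| ≤ 1 := by rwa [abs_neg]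
    rw [hF t]
    have heq : Set.EqOn
        (fun s => Real.log (Real.sin (s + t * w s) / Real.sin (s - t * w s)) * w' s)
        (fun s => Real.log (Real.sin (s + t * w s)) * w' s
          - Real.log (Real.sin (s + (-t) * w s)) * w' s) (Set.uIcc 0 π) := by
      rw [Set.uIcc_of_le hπ.le]
      intro s hs
      rcases eq_or_lt_of_le hs.1 with h0 | h0
      · simp only [← h0, hw0, mul_zero, add_zero, sub_zero, Real.sin_zero, div_zero,
          Real.log_zero, zero_mul, sub_self]
      rcases eq_or_lt_of_le hs.2 with hp | hp
      · simp only [hp, hwpi, mul_zero, add_zero, sub_zero, Real.sin_pi, div_zero,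
          Real.log_zero, zero_mul, sub_self]
      · have hx1 := (key t ht s ⟨h0, hp⟩).1
        have hx2 := (key (-t) ht' s ⟨h0, hp⟩).1
        have hp1 : 0 < Real.sin (s + t * w s) := Real.sin_pos_of_pos_of_lt_pi hx1.1 hx1.2
        have hp2 : 0 < Real.sin (s + (-t) * w s) := Real.sin_pos_of_pos_of_lt_pi hx2.1 hx2.2
        show Real.log (Real.sin (s + t * w s) / Real.sin (s - t * w s)) * w' s = _
        have hrw : s - t * w s = s + (-t) * w s := by ring
        rw [hrw, Real.log_div hp1.ne' hp2.ne', sub_mul]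
    rw [intervalIntegral.integral_congr heq,
      intervalIntegral.integral_sub (hIntw' t ht) (hIntw' (-t) ht')]
  -- location where w ≠ 0
  obtain ⟨α, β, hα0, hαβ, hβπ, hwne⟩ :
      ∃ α β : ℝ, 0 < α ∧ α < β ∧ β < π ∧ ∀ s ∈ Set.Ioo α β, w s ≠ 0 := by
    obtain ⟨s₀, hs₀, hws₀⟩ := hne
    have hs₀0 : s₀ ≠ 0 := fun h => hws₀ (h ▸ hw0)
    have hs₀π : s₀ ≠ π := fun h => hws₀ (h ▸ hwpi)
    have hI : s₀ ∈ Set.Ioo (0:ℝ) π :=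
      ⟨lt_of_le_of_ne hs₀.1 (Ne.symm hs₀0), lt_of_le_of_ne hs₀.2 hs₀π⟩
    have hca : ContinuousAt w s₀ := hwc.continuousAt (Icc_mem_nhds hI.1 hI.2)
    have hev : ∀ᶠ x in nhds s₀, w x ≠ 0 := hca.eventually_ne hws₀
    rw [Metric.eventually_nhds_iff] at hev
    obtain ⟨ε, hε, hball⟩ := hev
    refine ⟨max (s₀ - ε/2) (s₀/2), min (s₀ + ε/2) ((s₀ + π)/2), ?_, ?_, ?_, ?_⟩
    · exact lt_max_of_lt_right (by linarith [hI.1])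
    · have hA : max (s₀ - ε/2) (s₀/2) < s₀ := max_lt (by linarith) (by linarith [hI.1])
      have hB : s₀ < min (s₀ + ε/2) ((s₀ + π)/2) := lt_min (by linarith) (by linarith [hI.2])
      linarith
    · have : min (s₀ + ε/2) ((s₀ + π)/2) ≤ (s₀ + π)/2 := min_le_right _ _
      linarith [hI.2]
    · intro s hs
      apply hball
      rw [Real.dist_eq, abs_lt]
      have h1 := hs.1
      have h2 := hs.2
      have h3 : s₀ - ε/2 ≤ max (s₀ - ε/2) (s₀/2) := le_max_left _ _
      have h4 : min (s₀ + ε/2) ((s₀ + π)/2) ≤ s₀ + ε/2 := min_le_left _ _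
      constructor <;> linarith
  -- positivity of G t := 2C - P t - P (-t)
  have hGpos : ∀ t : ℝ, 0 < t → t ≤ 1 → 0 < 2 * C - P t - P (-t) := by
    intro t ht ht1
    have habs : |t| ≤ 1 := by rw [abs_of_pos ht]; exact ht1
    have habs' : |(-t)| ≤ 1 := by rwa [abs_neg]
    have hgint : IntervalIntegrable (fun s => 2 * Real.log (Real.sin s)
        - Real.log (Real.sin (s + t * w s)) - Real.log (Real.sin (s + (-t) * w s)))
        volume 0 π := ((hIls.const_mul 2).sub (hInt t habs)).sub (hInt (-t) habs')
    have hEq : (∫ s in (0:ℝ)..π, (2 * Real.log (Real.sin s)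
        - Real.log (Real.sin (s + t * w s)) - Real.log (Real.sin (s + (-t) * w s))))
        = 2 * C - P t - P (-t) := by
      rw [intervalIntegral.integral_sub ((hIls.const_mul 2).sub (hInt t habs)) (hInt (-t) habs'),
        intervalIntegral.integral_sub (hIls.const_mul 2) (hInt t habs),
        intervalIntegral.integral_const_mul]
    rw [← hEq]
    apply integral_pos_of_subinterval hgint ?_ hα0 hαβ hβπ
    · -- strict positivity on Ioo α β
      intro s hs'
      have hs : s ∈ Set.Ioo (0:ℝ) π := ⟨by linarith [hs'.1], by linarith [hs'.2]⟩
      have hwne' := hwne s hs'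
      have hx1 := (key t habs s hs).1
      have hx2 := (key (-t) habs' s hs).1
      have hxy : s + t * w s ≠ s + (-t) * w s := by
        intro h
        have htw : t * w s = 0 := by linarith [h.ge, h.le]
        rcases mul_eq_zero.mp htw with h' | h'
        · exact ht.ne' h'
        · exact hwne' h'
      have hconc := logsin_strict_concave hx1 hx2 hxy (a := 1/2) (b := 1/2)
        (by norm_num) (by norm_num) (by norm_num)
      have hmid : (1/2 : ℝ) * (s + t * w s) + (1/2 : ℝ) * (s + (-t) * w s) = s := by ring
      rw [hmid] at hconc
      linarith
    · -- nonneg on Icc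
      intro s hs
      rcases eq_or_lt_of_le hs.1 with h0 | h0
      · simp only [← h0, hw0, mul_zero, add_zero, Real.sin_zero, Real.log_zero]
        norm_num
      rcases eq_or_lt_of_le hs.2 with hp | hp
      · simp only [hp, hwpi, mul_zero, add_zero, Real.sin_pi, Real.log_zero]
        norm_num
      · have hx1 := (key t habs s ⟨h0, hp⟩).1
        have hx2 := (key (-t) habs' s ⟨h0, hp⟩).1
        have hconc := logsin_concave hx1 hx2 (a := 1/2) (b := 1/2)
          (by norm_num) (by norm_num) (by norm_num)
        have hmid : (1/2 : ℝ) * (s + t * w s) + (1/2 : ℝ) * (s + (-t) * w s) = s := by ring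
        rw [hmid] at hconc
        linarith
  -- strict slope inequality
  have hGslope : ∀ t₁ t₂ : ℝ, 0 < t₁ → t₁ < t₂ → t₂ ≤ 1 →
      0 < t₁ * (2 * C - P t₂ - P (-t₂)) - t₂ * (2 * C - P t₁ - P (-t₁)) := by
    intro t₁ t₂ h1 h12 h2
    have h02 : 0 < t₂ := h1.trans h12
    have ha1 : |t₁| ≤ 1 := by rw [abs_of_pos h1]; linarith
    have ha1' : |(-t₁)| ≤ 1 := by rwa [abs_neg]
    have ha2 : |t₂| ≤ 1 := by rw [abs_of_pos h02]; exact h2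
    have ha2' : |(-t₂)| ≤ 1 := by rwa [abs_neg]
    have hiA : IntervalIntegrable (fun s => 2 * Real.log (Real.sin s)
        - Real.log (Real.sin (s + t₂ * w s)) - Real.log (Real.sin (s + (-t₂) * w s)))
        volume 0 π := ((hIls.const_mul 2).sub (hInt t₂ ha2)).sub (hInt (-t₂) ha2')
    have hiB : IntervalIntegrable (fun s => 2 * Real.log (Real.sin s)
        - Real.log (Real.sin (s + t₁ * w s)) - Real.log (Real.sin (s + (-t₁) * w s)))
        volume 0 π := ((hIls.const_mul 2).sub (hInt t₁ ha1)).sub (hInt (-t₁) ha1')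
    have hgint : IntervalIntegrable (fun s =>
        t₁ * (2 * Real.log (Real.sin s) - Real.log (Real.sin (s + t₂ * w s))
          - Real.log (Real.sin (s + (-t₂) * w s)))
        - t₂ * (2 * Real.log (Real.sin s) - Real.log (Real.sin (s + t₁ * w s))
          - Real.log (Real.sin (s + (-t₁) * w s)))) volume 0 π :=
      (hiA.const_mul t₁).sub (hiB.const_mul t₂)
    have hEqA : (∫ s in (0:ℝ)..π, (2 * Real.log (Real.sin s)
        - Real.log (Real.sin (s + t₂ * w s)) - Real.log (Real.sin (s + (-t₂) * w s))))
        = 2 * C - P t₂ - P (-t₂) := by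
      rw [intervalIntegral.integral_sub ((hIls.const_mul 2).sub (hInt t₂ ha2)) (hInt (-t₂) ha2'),
        intervalIntegral.integral_sub (hIls.const_mul 2) (hInt t₂ ha2),
        intervalIntegral.integral_const_mul]
    have hEqB : (∫ s in (0:ℝ)..π, (2 * Real.log (Real.sin s)
        - Real.log (Real.sin (s + t₁ * w s)) - Real.log (Real.sin (s + (-t₁) * w s))))
        = 2 * C - P t₁ - P (-t₁) := by
      rw [intervalIntegral.integral_sub ((hIls.const_mul 2).sub (hInt t₁ ha1)) (hInt (-t₁) ha1'),
        intervalIntegral.integral_sub (hIls.const_mul 2) (hInt t₁ ha1),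
        intervalIntegral.integral_const_mul]
    have hEq : (∫ s in (0:ℝ)..π, (
        t₁ * (2 * Real.log (Real.sin s) - Real.log (Real.sin (s + t₂ * w s))
          - Real.log (Real.sin (s + (-t₂) * w s)))
        - t₂ * (2 * Real.log (Real.sin s) - Real.log (Real.sin (s + t₁ * w s))
          - Real.log (Real.sin (s + (-t₁) * w s)))))
        = t₁ * (2 * C - P t₂ - P (-t₂)) - t₂ * (2 * C - P t₁ - P (-t₁)) := by
      rw [intervalIntegral.integral_sub (hiA.const_mul t₁) (hiB.const_mul t₂),
        intervalIntegral.integral_const_mul, intervalIntegral.integral_const_mul,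
        hEqA, hEqB]
    rw [← hEq]
    -- pointwise bracket inequalities
    have hbr : ∀ s ∈ Set.Ioo (0:ℝ) π, ∀ τ₂ : ℝ, |τ₂| ≤ 1 → ∀ τ₁ : ℝ, τ₁ = t₁ / t₂ * τ₂ →
        t₁ * Real.log (Real.sin (s + τ₂ * w s)) + (t₂ - t₁) * Real.log (Real.sin s)
          ≤ t₂ * Real.log (Real.sin (s + τ₁ * w s)) := by
      intro s hs τ₂ hτ₂ τ₁ hτ₁
      have hx := (key τ₂ hτ₂ s hs).1
      have hsum : t₁/t₂ + (t₂ - t₁)/t₂ = 1 := by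
        rw [← add_div, show t₁ + (t₂ - t₁) = t₂ by ring, div_self h02.ne']
      have hcc := logsin_concave hx hs (a := t₁/t₂) (b := (t₂ - t₁)/t₂)
        (div_nonneg h1.le h02.le) (div_nonneg (by linarith) h02.le) hsum
      have hd1 : t₁ / t₂ * (s + τ₂ * w s) + (t₂ - t₁) / t₂ * s = s + τ₁ * w s := by
        rw [hτ₁]
        field_simp
        ring
      rw [hd1] at hcc
      have h := mul_le_mul_of_nonneg_left hcc h02.le
      have e1 : t₂ * (t₁ / t₂ * Real.log (Real.sin (s + τ₂ * w s))
          + (t₂ - t₁) / t₂ * Real.log (Real.sin s))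
          = t₁ * Real.log (Real.sin (s + τ₂ * w s))
            + (t₂ - t₁) * Real.log (Real.sin s) := by
        field_simp
      rw [e1] at h
      exact h
    apply integral_pos_of_subinterval hgint ?_ hα0 hαβ hβπ
    · -- strict positivity on Ioo α β
      intro s hs'
      have hs : s ∈ Set.Ioo (0:ℝ) π := ⟨by linarith [hs'.1], by linarith [hs'.2]⟩
      have hwne' := hwne s hs'
      have k2 := hbr s hs (-t₂) ha2' (-t₁)
        (by rw [mul_neg, div_mul_cancel₀ t₁ h02.ne'])
      -- strict version for the + bracket
      have hx := (key t₂ ha2 s hs).1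
      have hxy : s + t₂ * w s ≠ s := by
        intro h
        have : t₂ * w s = 0 := by linarith [h.le, h.ge]
        rcases mul_eq_zero.mp this with h' | h'
        · exact h02.ne' h'
        · exact hwne' h'
      have hsum : t₁/t₂ + (t₂ - t₁)/t₂ = 1 := by
        rw [← add_div, show t₁ + (t₂ - t₁) = t₂ by ring, div_self h02.ne']
      have hcc := logsin_strict_concave hx hs hxy (a := t₁/t₂) (b := (t₂ - t₁)/t₂)
        (div_pos h1 h02) (div_pos (by linarith) h02) hsum
      have hd1 : t₁ / t₂ * (s + t₂ * w s) + (t₂ - t₁) / t₂ * s = s + t₁ * w s := by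
        field_simp
        ring
      rw [hd1] at hcc
      have h := mul_lt_mul_of_pos_left hcc h02
      have e1 : t₂ * (t₁ / t₂ * Real.log (Real.sin (s + t₂ * w s))
          + (t₂ - t₁) / t₂ * Real.log (Real.sin s))
          = t₁ * Real.log (Real.sin (s + t₂ * w s))
            + (t₂ - t₁) * Real.log (Real.sin s) := by
        field_simp
      rw [e1] at h
      linarith
    · -- nonneg on Icc
      intro s hs
      rcases eq_or_lt_of_le hs.1 with h0 | h0
      · simp only [← h0, hw0, mul_zero, add_zero, Real.sin_zero, Real.log_zero]
        norm_num
      rcases eq_or_lt_of_le hs.2 with hp | hp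
      · simp only [hp, hwpi, mul_zero, add_zero, Real.sin_pi, Real.log_zero]
        norm_num
      · have k1 := hbr s ⟨h0, hp⟩ t₂ ha2 t₁ (by field_simp)
        have k2 := hbr s ⟨h0, hp⟩ (-t₂) ha2' (-t₁) (by field_simp)
        linarith
  -- F t = G t / t
  have hFG : ∀ t : ℝ, 0 < t → t ≤ 1 → F t = (2 * C - P t - P (-t)) / t := by
    intro t ht ht1
    have habs : |t| ≤ 1 := by rw [abs_of_pos ht]; exact ht1
    have habs' : |(-t)| ≤ 1 := by rwa [abs_neg]
    have h1 := hFTC t habs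
    have h2 := hFTC (-t) habs'
    rw [hFA t habs]
    field_simp
    nlinarith [h1, h2]
  have hF0 : F 0 = 0 := by
    have := hFA 0 (by norm_num)
    simpa using this
  have hFpos : ∀ t ∈ Set.Ioc (0:ℝ) 1, 0 < F t := by
    intro t ht
    rw [hFG t ht.1 ht.2]
    exact div_pos (hGpos t ht.1 ht.2) ht.1
  refine ⟨hF0, ?_, hFpos⟩
  intro t₁ h₁ t₂ h₂ h₁₂
  rcases eq_or_lt_of_le h₁.1 with h0 | h0
  · rw [← h0, hF0]
    exact hFpos t₂ ⟨by rw [← h0] at h₁₂; exact h₁₂, h₂.2⟩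
  · rw [hFG t₁ h0 h₁.2, hFG t₂ (h0.trans h₁₂) h₂.2]
    rw [div_lt_div_iff₀ h0 (h0.trans h₁₂)]
    nlinarith [hGslope t₁ t₂ h0 h₁₂ h₂.2]
end

section
/- For λ ∈ ℝ define f_λ : [0,π] → [0,π] by f_λ(0) = 0, f_λ(π) = π, and f_λ(φ) = π/2 − arctan( e^{−λ} · cos φ / sin φ ) for φ ∈ (0,π), and let g = f_λ ∘ f_λ (the angle map after two successive wall collisions). Then for every φ ∈ (0,π), the n-th iterate satisfies gⁿ(φ) = π/2 − arctan( e^{−2nλ} · cot φ ). Consequently: if λ > 0 then gⁿ(φ) → π/2 as n → ∞ for every φ ∈ (0,π); and if λ < 0 then gⁿ(φ) → 0 for every φ ∈ (0,π/2) and gⁿ(φ) → π for every φ ∈ (π/2,π). -/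
open Real Filter

private lemma cot_pi_div_two_sub_arctan (t : ℝ) :
    Real.cos (π / 2 - Real.arctan t) / Real.sin (π / 2 - Real.arctan t) = t := by
  rw [Real.cos_pi_div_two_sub, Real.sin_pi_div_two_sub, ← Real.tan_eq_sin_div_cos,
    Real.tan_arctan]

private lemma mem_Ioo_pi_div_two_sub_arctan (t : ℝ) :
    π / 2 - Real.arctan t ∈ Set.Ioo (0:ℝ) π := by
  have h1 := Real.arctan_lt_pi_div_two t
  have h2 := Real.neg_pi_div_two_lt_arctan t
  constructor <;> [linarith; linarith]

/-- For the map `f_λ` (with `f_λ(0)=0`, `f_λ(π)=π` and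
`f_λ(φ) = π/2 − arctan(e^{−λ}·cos φ / sin φ)` on `(0,π)`) and `g = f_λ ∘ f_λ`, the iterates
satisfy `gⁿ(φ) = π/2 − arctan(e^{−2nλ}·cot φ)` for `φ ∈ (0,π)`. Consequently, if `λ > 0`
then `gⁿ(φ) → π/2` for every `φ ∈ (0,π)`, and if `λ < 0` then `gⁿ(φ) → 0` for
`φ ∈ (0,π/2)` and `gⁿ(φ) → π` for `φ ∈ (π/2,π)`. -/
theorem stmt_12 (lam : ℝ) (f : ℝ → ℝ)
    (hf0 : f 0 = 0) (hfpi : f π = π)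
    (hf : ∀ φ ∈ Set.Ioo (0:ℝ) π,
      f φ = π / 2 - Real.arctan (Real.exp (-lam) * (Real.cos φ / Real.sin φ))) :
    (∀ φ ∈ Set.Ioo (0:ℝ) π, ∀ n : ℕ,
      (f ∘ f)^[n] φ
        = π / 2 - Real.arctan (Real.exp (-(2 * n * lam)) * (Real.cos φ / Real.sin φ))) ∧
    (0 < lam → ∀ φ ∈ Set.Ioo (0:ℝ) π,
      Tendsto (fun n : ℕ => (f ∘ f)^[n] φ) atTop (nhds (π / 2))) ∧
    (lam < 0 →
      (∀ φ ∈ Set.Ioo (0:ℝ) (π / 2),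
        Tendsto (fun n : ℕ => (f ∘ f)^[n] φ) atTop (nhds 0)) ∧
      (∀ φ ∈ Set.Ioo (π / 2) π,
        Tendsto (fun n : ℕ => (f ∘ f)^[n] φ) atTop (nhds π))) := by
  -- f on the form π/2 - arctan s
  have hstep : ∀ s : ℝ, f (π / 2 - Real.arctan s)
      = π / 2 - Real.arctan (Real.exp (-lam) * s) := by
    intro s
    rw [hf _ (mem_Ioo_pi_div_two_sub_arctan s), cot_pi_div_two_sub_arctan]
  have hiter : ∀ φ ∈ Set.Ioo (0:ℝ) π, ∀ n : ℕ,
      (f ∘ f)^[n] φ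
        = π / 2 - Real.arctan (Real.exp (-(2 * n * lam)) * (Real.cos φ / Real.sin φ)) := by
    intro φ hφ n
    induction n with
    | zero =>
        have ht : Real.cos φ / Real.sin φ = Real.tan (π / 2 - φ) := by
          rw [Real.tan_pi_div_two_sub, Real.tan_eq_sin_div_cos, inv_div]
        simp only [Function.iterate_zero, id_eq, Nat.cast_zero]
        rw [ht, show (-(2 * (0:ℝ) * lam)) = 0 by ring, Real.exp_zero, one_mul,
          Real.arctan_tan (by linarith [hφ.2]) (by linarith [hφ.1])]
        ring
    | succ n ih =>
        rw [Function.iterate_succ_apply', ih, Function.comp_apply, hstep, hstep,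
          ← mul_assoc, ← mul_assoc, ← Real.exp_add, ← Real.exp_add]
        congr 2
        push_cast
        ring
  refine ⟨hiter, ?_, ?_⟩
  · -- lam > 0
    intro hlam φ hφ
    have heq : ∀ n : ℕ, Real.exp (-(2 * n * lam)) = (Real.exp (-(2 * lam))) ^ n := by
      intro n; rw [← Real.exp_nat_mul]; congr 1; push_cast; ring
    have h0 : Tendsto (fun n : ℕ => Real.exp (-(2 * n * lam)) * (Real.cos φ / Real.sin φ))
        atTop (nhds 0) := by
      have hb : |Real.exp (-(2 * lam))| < 1 := by
        rw [abs_of_pos (Real.exp_pos _)]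
        exact Real.exp_lt_one_iff.2 (by linarith)
      have h := (tendsto_pow_atTop_nhds_zero_of_abs_lt_one hb).mul_const
        (Real.cos φ / Real.sin φ)
      rw [zero_mul] at h
      simpa only [heq] using h
    have : Tendsto (fun n : ℕ => π / 2 - Real.arctan
        (Real.exp (-(2 * n * lam)) * (Real.cos φ / Real.sin φ))) atTop (nhds (π / 2)) := by
      have := (Real.continuous_arctan.tendsto 0).comp h0
      rw [Real.arctan_zero] at this
      simpa using (tendsto_const_nhds (x := π / 2)).sub this
    exact this.congr (fun n => (hiter φ hφ n).symm)
  · -- lam < 0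
    intro hlam
    have hexp : Tendsto (fun n : ℕ => Real.exp (-(2 * n * lam))) atTop atTop := by
      have heq : ∀ n : ℕ, Real.exp (-(2 * n * lam)) = (Real.exp (-(2 * lam))) ^ n := by
        intro n; rw [← Real.exp_nat_mul]; congr 1; push_cast; ring
      have h := tendsto_pow_atTop_atTop_of_one_lt
        (Real.one_lt_exp_iff.2 (by linarith : (0:ℝ) < -(2 * lam)))
      exact h.congr (fun n => (heq n).symm)
    constructor
    · intro φ hφ
      have hc : 0 < Real.cos φ / Real.sin φ := by
        have h1 : 0 < Real.cos φ := Real.cos_pos_of_mem_Ioo ⟨by linarith [hφ.1, Real.pi_pos], hφ.2⟩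
        have h2 : 0 < Real.sin φ := Real.sin_pos_of_pos_of_lt_pi hφ.1
          (by linarith [hφ.2, Real.pi_pos])
        positivity
      have hφ' : φ ∈ Set.Ioo (0:ℝ) π := ⟨hφ.1, by linarith [hφ.2, Real.pi_pos]⟩
      have hmul : Tendsto (fun n : ℕ => Real.exp (-(2 * n * lam)) * (Real.cos φ / Real.sin φ))
          atTop atTop := hexp.atTop_mul_const hc
      have harc : Tendsto (fun n : ℕ => Real.arctan
          (Real.exp (-(2 * n * lam)) * (Real.cos φ / Real.sin φ))) atTop (nhds (π / 2)) :=
        (Real.tendsto_arctan_atTop.mono_right nhdsWithin_le_nhds).comp hmul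
      have : Tendsto (fun n : ℕ => π / 2 - Real.arctan
          (Real.exp (-(2 * n * lam)) * (Real.cos φ / Real.sin φ))) atTop (nhds 0) := by
        simpa using (tendsto_const_nhds (x := π / 2)).sub harc
      exact this.congr (fun n => (hiter φ hφ' n).symm)
    · intro φ hφ
      have h1 : Real.cos φ < 0 := Real.cos_neg_of_pi_div_two_lt_of_lt hφ.1
        (by linarith [hφ.2, Real.pi_pos])
      have h2 : 0 < Real.sin φ := Real.sin_pos_of_pos_of_lt_pi
        (by linarith [hφ.1, Real.pi_pos]) hφ.2
      have hc : Real.cos φ / Real.sin φ < 0 := div_neg_of_neg_of_pos h1 h2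
      have hφ' : φ ∈ Set.Ioo (0:ℝ) π := ⟨by linarith [hφ.1, Real.pi_pos], hφ.2⟩
      have hmul : Tendsto (fun n : ℕ => Real.exp (-(2 * n * lam)) * (Real.cos φ / Real.sin φ))
          atTop atBot := hexp.atTop_mul_const_of_neg hc
      have harc : Tendsto (fun n : ℕ => Real.arctan
          (Real.exp (-(2 * n * lam)) * (Real.cos φ / Real.sin φ))) atTop (nhds (-(π / 2))) :=
        (Real.tendsto_arctan_atBot.mono_right nhdsWithin_le_nhds).comp hmul
      have : Tendsto (fun n : ℕ => π / 2 - Real.arctan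
          (Real.exp (-(2 * n * lam)) * (Real.cos φ / Real.sin φ))) atTop (nhds π) := by
        have := (tendsto_const_nhds (x := π / 2)).sub harc
        simpa [sub_neg_eq_add, add_halves] using this
      exact this.congr (fun n => (hiter φ hφ' n).symm)
end

section
/- Let N ≥ 1 and let u₁,…,u_N, v₁,…,v_N be real numbers satisfying the energy normalization u₁² + v₁² + … + u_N² + v_N² = N. If u₁ + … + u_N > √(N(N−1)), then u_i > 0 for every i = 1,…,N. -/
open Real

/-- If `∑ᵢ (uᵢ² + vᵢ²) = N` and `∑ᵢ uᵢ > √(N(N−1))`, then `uᵢ > 0` for every `i`. -/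
theorem stmt_13 (N : ℕ) (hN : 1 ≤ N) (u v : Fin N → ℝ)
    (henergy : ∑ i, (u i ^ 2 + v i ^ 2) = (N : ℝ))
    (hmom : Real.sqrt ((N : ℝ) * ((N : ℝ) - 1)) < ∑ i, u i) :
    ∀ i, 0 < u i := by
  have hN1 : (1 : ℝ) ≤ (N : ℝ) := by exact_mod_cast hN
  intro j
  by_contra hj
  push_neg at hj
  set s := Finset.univ.erase j with hs
  have hsum : ∑ i, u i = u j + ∑ i ∈ s, u i := by
    rw [hs, Finset.add_sum_erase _ _ (Finset.mem_univ j)]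
  have h1 : Real.sqrt ((N : ℝ) * ((N : ℝ) - 1)) < ∑ i ∈ s, u i := by
    calc Real.sqrt ((N : ℝ) * ((N : ℝ) - 1)) < ∑ i, u i := hmom
      _ ≤ ∑ i ∈ s, u i := by rw [hsum]; linarith
  have hpos : 0 < ∑ i ∈ s, u i := lt_of_le_of_lt (Real.sqrt_nonneg _) h1
  have hsq : (N : ℝ) * ((N : ℝ) - 1) < (∑ i ∈ s, u i) ^ 2 :=
    (Real.sqrt_lt' hpos).mp h1
  have hcard : (s.card : ℝ) = (N : ℝ) - 1 := by
    rw [hs, Finset.card_erase_of_mem (Finset.mem_univ j)]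
    simp [Nat.cast_sub hN]
  have hcs := Finset.sum_mul_sq_le_sq_mul_sq s (fun _ => (1 : ℝ)) u
  simp only [one_pow, one_mul, Finset.sum_const, nsmul_eq_mul, mul_one] at hcs
  rw [hcard] at hcs
  have husq : ∑ i ∈ s, u i ^ 2 ≤ (N : ℝ) := by
    have h2 : ∑ i ∈ s, u i ^ 2 ≤ ∑ i, u i ^ 2 :=
      Finset.sum_le_sum_of_subset_of_nonneg (Finset.erase_subset _ _)
        (fun i _ _ => sq_nonneg _)
    have h3 : ∑ i, u i ^ 2 ≤ (N : ℝ) := by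
      rw [← henergy]
      exact Finset.sum_le_sum fun i _ => by nlinarith [sq_nonneg (v i)]
    linarith
  nlinarith [hsq, hcs, husq]
end

section
/- Let λ < 0 and let (u⁻, v⁻) and (u⁺, v⁺) be velocity vectors with v⁻ ≠ 0, v⁺ ≠ 0, satisfying energy conservation (u⁺)² + (v⁺)² = (u⁻)² + (v⁻)² and the twisting reflection rule u⁺/|v⁺| = e^{−λ} · u⁻/|v⁻|. If u⁻ > 0, then u⁺ > u⁻ and |v⁺| < |v⁻|. -/
open Real

/-- For `λ < 0`, if the incoming and outgoing velocities `(u⁻,v⁻)`, `(u⁺,v⁺)` (with nonzero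
vertical components) satisfy energy conservation and the twisting rule
`u⁺/|v⁺| = e^{−λ}·u⁻/|v⁻|`, and `u⁻ > 0`, then `u⁺ > u⁻` and `|v⁺| < |v⁻|`. -/
theorem stmt_15 (lam : ℝ) (hlam : lam < 0) (um vm up vp : ℝ)
    (hvm : vm ≠ 0) (hvp : vp ≠ 0)
    (henergy : up ^ 2 + vp ^ 2 = um ^ 2 + vm ^ 2)
    (hrule : up / |vp| = Real.exp (-lam) * (um / |vm|))
    (hum : 0 < um) :
    um < up ∧ |vp| < |vm| := by
  have hb : 0 < |vm| := abs_pos.mpr hvm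
  have ha : 0 < |vp| := abs_pos.mpr hvp
  have hk : 1 < Real.exp (-lam) := by
    rw [show (1:ℝ) = Real.exp 0 by simp]
    exact Real.exp_lt_exp.mpr (by linarith)
  have hmul : up * |vm| = Real.exp (-lam) * um * |vp| := by
    field_simp at hrule
    linarith
  have hup : 0 < up := by
    have : 0 < up * |vm| := by
      rw [hmul]; positivity
    nlinarith [this]
  have hv2 : vp ^ 2 = |vp| ^ 2 := (sq_abs vp).symm
  have hv2' : vm ^ 2 = |vm| ^ 2 := (sq_abs vm).symm
  have hab : |vp| < |vm| := by
    by_contra h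
    push_neg at h
    have h1 : um * |vm| < up * |vm| := by
      have e1 : um * |vm| * 1 < um * |vm| * Real.exp (-lam) :=
        mul_lt_mul_of_pos_left hk (mul_pos hum hb)
      have e2 : Real.exp (-lam) * um * |vm| ≤ Real.exp (-lam) * um * |vp| :=
        mul_le_mul_of_nonneg_left h (by positivity)
      nlinarith [e1, e2]
    have h2 : um < up := lt_of_mul_lt_mul_right h1 hb.le
    nlinarith
  have hsq : um ^ 2 < up ^ 2 := by nlinarith
  exact ⟨by nlinarith, hab⟩
end

section
/- Let h be an orientation-reversing homeomorphism of [0,π] (a continuous strictly decreasing bijection of [0,π] onto itself) with (unique) fixed point φ₀ ∈ (0,π), and let g = h ∘ h. Let I be a connected component of the open set { φ ∈ [0,π] : g(φ) ≠ φ }. Then: (i) h(I) is also a connected component of this set, and h(h(I)) = I; (ii) I and h(I) lie on opposite sides of φ₀, i.e. one of them is contained in (0, φ₀) and the other in (φ₀, π); and (iii) the points of I move under g toward φ₀ if and only if the points of h(I) move under g toward φ₀ — precisely, (g(φ) − φ)·(φ₀ − φ) > 0 holds for all φ ∈ I if and only if (g(ψ) − ψ)·(φ₀ − ψ) > 0 holds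 for all ψ ∈ h(I). -/
open Real Set

/-- Let `h` be an orientation-reversing homeomorphism of `[0,π]` with fixed point
`φ₀ ∈ (0,π)`, let `g = h ∘ h`, and let `I` be a connected component of the set
`E = {φ ∈ [0,π] : g(φ) ≠ φ}`. Then: (i) `h(I)` is also a connected component of `E` and
`h(h(I)) = I`; (ii) `I` and `h(I)` lie on opposite sides of `φ₀`; and (iii) the points of
`I` move under `g` toward `φ₀` iff the points of `h(I)` move under `g` toward `φ₀`. -/
theorem stmt_17 (h : ℝ → ℝ)
    (hcont : ContinuousOn h (Set.Icc 0 π))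
    (hanti : StrictAntiOn h (Set.Icc 0 π))
    (hsurj : h '' Set.Icc 0 π = Set.Icc 0 π)
    (φ₀ : ℝ) (hφ₀ : φ₀ ∈ Set.Ioo (0:ℝ) π) (hfix : h φ₀ = φ₀)
    (E : Set ℝ) (hE : E = {φ | φ ∈ Set.Icc (0:ℝ) π ∧ h (h φ) ≠ φ})
    (I : Set ℝ) (x : ℝ) (hx : x ∈ E) (hI : I = connectedComponentIn E x) :
    (∃ y ∈ E, h '' I = connectedComponentIn E y) ∧
    h '' (h '' I) = I ∧
    ((I ⊆ Set.Ioo 0 φ₀ ∧ h '' I ⊆ Set.Ioo φ₀ π) ∨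
      (I ⊆ Set.Ioo φ₀ π ∧ h '' I ⊆ Set.Ioo 0 φ₀)) ∧
    ((∀ φ ∈ I, 0 < (h (h φ) - φ) * (φ₀ - φ)) ↔
      (∀ ψ ∈ h '' I, 0 < (h (h ψ) - ψ) * (φ₀ - ψ))) := by
  have hπ : (0:ℝ) < π := Real.pi_pos
  have h0m : (0:ℝ) ∈ Icc (0:ℝ) π := ⟨le_refl _, hπ.le⟩
  have hπm : π ∈ Icc (0:ℝ) π := ⟨hπ.le, le_refl _⟩
  have hφ₀m : φ₀ ∈ Icc (0:ℝ) π := Ioo_subset_Icc_self hφ₀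
  have hmem : ∀ φ ∈ Icc (0:ℝ) π, h φ ∈ Icc (0:ℝ) π := by
    intro φ hφ; rw [← hsurj]; exact ⟨φ, hφ, rfl⟩
  have h0 : h 0 = π := by
    have : π ∈ h '' Icc (0:ℝ) π := by rw [hsurj]; exact hπm
    obtain ⟨t, ht, hht⟩ := this
    rcases eq_or_lt_of_le ht.1 with h'|h'
    · subst h'; exact hht
    · exact absurd ((hht ▸ hanti h0m ht h').trans_le (hmem 0 h0m).2) (lt_irrefl _)
  have hπ0 : h π = 0 := by
    have : (0:ℝ) ∈ h '' Icc (0:ℝ) π := by rw [hsurj]; exact h0m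
    obtain ⟨t, ht, hht⟩ := this
    rcases eq_or_lt_of_le ht.2 with h'|h'
    · subst h'; exact hht
    · exact absurd ((hmem π hπm).1.trans_lt (hht ▸ hanti ht hπm h')) (lt_irrefl _)
  have gmono : StrictMonoOn (fun φ => h (h φ)) (Icc (0:ℝ) π) := by
    intro a ha b hb hab
    exact hanti (hmem b hb) (hmem a ha) (hanti ha hb hab)
  have gcont : ContinuousOn (fun φ => h (h φ)) (Icc (0:ℝ) π) :=
    hcont.comp hcont (fun φ hφ => hmem φ hφ)
  have g0 : h (h 0) = 0 := by rw [h0, hπ0]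
  have gπ : h (h π) = π := by rw [hπ0, h0]
  have gφ₀ : h (h φ₀) = φ₀ := by rw [hfix, hfix]
  have ESub : E ⊆ Ioo (0:ℝ) π := by
    rintro φ hφ
    rw [hE] at hφ
    obtain ⟨⟨h1, h2⟩, hne⟩ := hφ
    refine ⟨h1.lt_of_ne ?_, h2.lt_of_ne ?_⟩
    · rintro rfl; exact hne g0
    · rintro rfl; exact hne gπ
  have EIcc : E ⊆ Icc (0:ℝ) π := by rw [hE]; exact fun φ hφ => hφ.1
  have Eopen : IsOpen E := by
    have heq : E = Ioo (0:ℝ) π ∩ (fun φ => h (h φ) - φ) ⁻¹' ({(0:ℝ)}ᶜ) := by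
      ext φ
      simp only [mem_inter_iff, mem_preimage, mem_compl_iff, mem_singleton_iff, sub_ne_zero]
      constructor
      · intro hφ; exact ⟨ESub hφ, by rw [hE] at hφ; exact hφ.2⟩
      · rintro ⟨h1, h2⟩; rw [hE]; exact ⟨Ioo_subset_Icc_self h1, h2⟩
    rw [heq]
    exact ContinuousOn.isOpen_inter_preimage
      ((gcont.sub continuousOn_id).mono Ioo_subset_Icc_self) isOpen_Ioo
      isClosed_singleton.isOpen_compl
  -- basic facts about I
  have hIx : x ∈ I := hI ▸ mem_connectedComponentIn hx
  have hIE : I ⊆ E := hI ▸ connectedComponentIn_subset E x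
  have hIconn : IsPreconnected I := hI ▸ isPreconnected_connectedComponentIn
  have hIopen : IsOpen I := hI ▸ Eopen.connectedComponentIn
  have hIord : OrdConnected I := hIconn.ordConnected
  have hIIoo : I ⊆ Ioo (0:ℝ) π := fun φ hφ => ESub (hIE hφ)
  have hIIcc : I ⊆ Icc (0:ℝ) π := fun φ hφ => Ioo_subset_Icc_self (hIIoo hφ)
  have hne : I.Nonempty := ⟨x, hIx⟩
  have hbddA : BddAbove I := ⟨π, fun y hy => (hIIoo hy).2.le⟩
  have hbddB : BddBelow I := ⟨0, fun y hy => (hIIoo hy).1.le⟩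
  set a := sInf I with ha
  set b := sSup I with hb
  have ha0 : 0 ≤ a := le_csInf hne (fun y hy => (hIIoo hy).1.le)
  have hbπ : b ≤ π := csSup_le hne (fun y hy => (hIIoo hy).2.le)
  have haIcc : a ∈ Icc (0:ℝ) π := ⟨ha0, (csInf_le hbddB hIx).trans ((hIIcc hIx).2.trans (le_refl _)) |>.trans (le_refl _)⟩
  have hbIcc : b ∈ Icc (0:ℝ) π := ⟨(hIIcc hIx).1.trans (le_csSup hbddA hIx), hbπ⟩
  -- I = Ioo a b
  have hIoo : I = Ioo a b := by
    apply Subset.antisymm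
    · intro φ hφ
      obtain ⟨ε, hε, hball⟩ := Metric.isOpen_iff.1 hIopen φ hφ
      rw [Real.ball_eq_Ioo] at hball
      constructor
      · have : φ - ε/2 ∈ I := hball ⟨by linarith, by linarith⟩
        have := csInf_le hbddB this
        linarith
      · have : φ + ε/2 ∈ I := hball ⟨by linarith, by linarith⟩
        have := le_csSup hbddA this
        linarith
    · intro φ hφ
      obtain ⟨c, hcI, hc⟩ := exists_lt_of_csInf_lt hne hφ.1
      obtain ⟨d, hdI, hd⟩ := exists_lt_of_lt_csSup hne hφ.2
      exact hIord.out hcI hdI ⟨hc.le, hd.le⟩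
  have haxb : x ∈ Ioo a b := hIoo ▸ hIx
  -- endpoints are not in E
  have hendE : ∀ c : ℝ, c = a ∨ c = b → c ∉ E := by
    rintro c hc hcE
    obtain ⟨ε, hε, hball⟩ := Metric.isOpen_iff.1 Eopen c hcE
    rw [Real.ball_eq_Ioo] at hball
    rcases hc with rfl | rfl
    · have hsub : Ioo (a - ε/2) b ⊆ E := by
        rintro y ⟨hy1, hy2⟩
        by_cases hya : a < y
        · exact hIE (hIoo ▸ (⟨hya, hy2⟩ : y ∈ Ioo a b))
        · exact hball ⟨by linarith, by push_neg at hya; linarith⟩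
      have hIsub : Ioo (a - ε/2) b ⊆ I :=
        hI ▸ isPreconnected_Ioo.subset_connectedComponentIn
          ⟨by linarith [haxb.1], haxb.2⟩ hsub
      have : a - ε/4 ∈ I := hIsub ⟨by linarith, by linarith [haxb.1, haxb.2]⟩
      have := csInf_le hbddB this
      linarith
    · have hsub : Ioo a (b + ε/2) ⊆ E := by
        rintro y ⟨hy1, hy2⟩
        by_cases hyb : y < b
        · exact hIE (hIoo ▸ (⟨hy1, hyb⟩ : y ∈ Ioo a b))
        · exact hball ⟨by push_neg at hyb; linarith, by linarith⟩
      have hIsub : Ioo a (b + ε/2) ⊆ I :=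
        hI ▸ isPreconnected_Ioo.subset_connectedComponentIn
          ⟨haxb.1, by linarith [haxb.2]⟩ hsub
      have : b + ε/4 ∈ I := hIsub ⟨by linarith [haxb.1, haxb.2], by linarith⟩
      have := le_csSup hbddA this
      linarith
  have ga : h (h a) = a := by
    by_contra h'
    exact hendE a (Or.inl rfl) (by rw [hE]; exact ⟨haIcc, h'⟩)
  have gb : h (h b) = b := by
    by_contra h'
    exact hendE b (Or.inr rfl) (by rw [hE]; exact ⟨hbIcc, h'⟩)
  -- g maps I onto I
  have hgI : (fun φ => h (h φ)) '' I = I := by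
    apply Subset.antisymm
    · rintro _ ⟨φ, hφ, rfl⟩
      have hφab : φ ∈ Ioo a b := hIoo ▸ hφ
      have hφIcc : φ ∈ Icc (0:ℝ) π := hIIcc hφ
      have h1 : a < h (h φ) := ga ▸ gmono haIcc hφIcc hφab.1
      have h2 : h (h φ) < b := gb ▸ gmono hφIcc hbIcc hφab.2
      exact hIoo ▸ (⟨h1, h2⟩ : h (h φ) ∈ Ioo a b)
    · have hab : a ≤ b := le_of_lt (haxb.1.trans haxb.2)
      have := intermediate_value_Ioo hab (gcont.mono (Icc_subset_Icc ha0 hbπ))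
      rw [ga, gb] at this
      rw [hIoo]
      exact fun φ hφ => by
        obtain ⟨t, ht, hht⟩ := this hφ
        exact ⟨t, hIoo ▸ ht, hht⟩
  have hhhI : h '' (h '' I) = I := by rw [Set.image_image]; exact hgI
  -- part (i)
  have hmapsto : ∀ φ ∈ E, h φ ∈ E := by
    intro φ hφ
    rw [hE] at hφ ⊢
    refine ⟨hmem φ hφ.1, fun heq => hφ.2 ?_⟩
    exact hanti.injOn (hmem _ (hmem _ hφ.1)) hφ.1 heq
  have hgx : h (h x) ∈ I := by rw [← hgI]; exact ⟨x, hIx, rfl⟩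
  have hconn_gx : connectedComponentIn E x = connectedComponentIn E (h (h x)) :=
    connectedComponentIn_eq (hI ▸ hgx)
  have hhxE : h x ∈ E := hmapsto x hx
  have hImg1 : h '' I ⊆ connectedComponentIn E (h x) := by
    apply IsPreconnected.subset_connectedComponentIn
    · exact hIconn.image h (hcont.mono hIIcc)
    · exact ⟨x, hIx, rfl⟩
    · rintro _ ⟨φ, hφ, rfl⟩; exact hmapsto φ (hIE hφ)
  have hImg2 : h '' connectedComponentIn E (h x) ⊆ I := by
    have hsub : h '' connectedComponentIn E (h x) ⊆ connectedComponentIn E (h (h x)) := by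
      apply IsPreconnected.subset_connectedComponentIn
      · exact isPreconnected_connectedComponentIn.image h
          (hcont.mono ((connectedComponentIn_subset E (h x)).trans EIcc))
      · exact ⟨h x, mem_connectedComponentIn hhxE, rfl⟩
      · rintro _ ⟨φ, hφ, rfl⟩; exact hmapsto φ (connectedComponentIn_subset E (h x) hφ)
    rw [← hconn_gx, ← hI] at hsub
    exact hsub
  have hImgEq : h '' I = connectedComponentIn E (h x) := by
    apply Subset.antisymm hImg1
    intro c hc
    have hcI : h c ∈ I := hImg2 ⟨c, hc, rfl⟩
    rw [← hgI] at hcI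
    obtain ⟨w, hwI, hw⟩ := hcI
    have hcIcc : c ∈ Icc (0:ℝ) π := EIcc (connectedComponentIn_subset E (h x) hc)
    have hwIcc : h w ∈ Icc (0:ℝ) π := hmem w (hIIcc hwI)
    have : h w = c := hanti.injOn hwIcc hcIcc hw
    exact this ▸ ⟨w, hwI, rfl⟩
  -- part (ii)
  have hφ₀E : φ₀ ∉ E := by
    rw [hE]; rintro ⟨-, hne'⟩; exact hne' gφ₀
  have hφ₀I : φ₀ ∉ I := fun hc => hφ₀E (hIE hc)
  have hxφ₀ : x ≠ φ₀ := fun hc => hφ₀E (hc ▸ hx)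
  have hside : (I ⊆ Set.Ioo 0 φ₀ ∧ h '' I ⊆ Set.Ioo φ₀ π) ∨
      (I ⊆ Set.Ioo φ₀ π ∧ h '' I ⊆ Set.Ioo 0 φ₀) := by
    rcases lt_or_gt_of_ne hxφ₀ with hlt | hgt
    · left
      have hIsub : I ⊆ Ioo 0 φ₀ := by
        intro φ hφ
        refine ⟨(hIIoo hφ).1, ?_⟩
        by_contra h'
        push_neg at h'
        exact hφ₀I (hIord.out hIx hφ ⟨hlt.le, h'⟩)
      refine ⟨hIsub, ?_⟩
      rintro _ ⟨φ, hφ, rfl⟩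
      have hφ' := hIsub hφ
      have hφIcc := hIIcc hφ
      exact ⟨hfix ▸ hanti hφIcc hφ₀m hφ'.2, h0 ▸ hanti h0m hφIcc hφ'.1⟩
    · right
      have hIsub : I ⊆ Ioo φ₀ π := by
        intro φ hφ
        refine ⟨?_, (hIIoo hφ).2⟩
        by_contra h'
        push_neg at h'
        exact hφ₀I (hIord.out hφ hIx ⟨h', hgt.le⟩)
      refine ⟨hIsub, ?_⟩
      rintro _ ⟨φ, hφ, rfl⟩
      have hφ' := hIsub hφ
      have hφIcc := hIIcc hφ
      exact ⟨hπ0 ▸ hanti hφIcc hπm hφ'.2, hfix ▸ hanti hφ₀m hφIcc hφ'.1⟩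
  -- part (iii)
  have key : ∀ φ ∈ I, (0 < (h (h φ) - φ) * (φ₀ - φ) ↔
      0 < (h (h (h φ)) - h φ) * (φ₀ - h φ)) := by
    intro φ hφ
    have hφIcc : φ ∈ Icc (0:ℝ) π := hIIcc hφ
    have hgφI : h (h φ) ∈ I := by rw [← hgI]; exact ⟨φ, hφ, rfl⟩
    have hgφIcc : h (h φ) ∈ Icc (0:ℝ) π := hIIcc hgφI
    have hlt : h (h (h φ)) < h φ ↔ φ < h (h φ) := hanti.lt_iff_gt hgφIcc hφIcc
    have hlt' : h φ < h (h (h φ)) ↔ h (h φ) < φ := hanti.lt_iff_gt hφIcc hgφIcc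
    rcases hside with ⟨hIsub, hImgsub⟩ | ⟨hIsub, hImgsub⟩
    · have h1 : φ < φ₀ := (hIsub hφ).2
      have h2 : φ₀ < h φ := (hImgsub ⟨φ, hφ, rfl⟩).1
      constructor
      · intro hp
        have : φ < h (h φ) := by nlinarith
        have := hlt.2 this
        nlinarith
      · intro hp
        have : h (h (h φ)) < h φ := by nlinarith
        have := hlt.1 this
        nlinarith
    · have h1 : φ₀ < φ := (hIsub hφ).1
      have h2 : h φ < φ₀ := (hImgsub ⟨φ, hφ, rfl⟩).2
      constructor
      · intro hp
        have : h (h φ) < φ := by nlinarith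
        have := hlt'.2 this
        nlinarith
      · intro hp
        have : h φ < h (h (h φ)) := by nlinarith
        have := hlt'.1 this
        nlinarith
  refine ⟨⟨h x, hhxE, hImgEq⟩, hhhI, hside, ?_⟩
  constructor
  · rintro hall _ ⟨φ, hφ, rfl⟩
    exact (key φ hφ).1 (hall φ hφ)
  · intro hall φ hφ
    exact (key φ hφ).2 (hall (h φ) ⟨φ, hφ, rfl⟩)
end
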